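/- arXiv:1009.5331 — 4 statements merged into one kernel-verified Lean document; each statement's English description precedes it below -/
import Mathlib

section
/- (Concave Perron–Frobenius fixed point theorem.) Let (E, ‖·‖) be a Banach space, K ⊆ E a closed convex cone on which ‖·‖ is increasing (x ≤_K y implies ‖x‖ ≤ ‖y‖). Let T : K → K be concave, i.e., T(μx + (1-μ)y) ≥_K μT(x) + (1-μ)T(y) for all μ ∈ [0,1], x,y ∈ K. Suppose there exist e ∈ K \ {0} and constants a, b > 0 such that a·e ≤_K T(x) ≤_K b·e for all x ∈ K with ‖x‖ = 1. Then there exists a unique x* ∈ K with ‖x*‖ = 1 such that the iterates of the normalized operator T̃(x) = T(x)/‖T(x)‖ converge to x* for every starting point x ∈ K \ {0}. -/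
open Filter Topology

set_option maxHeartbeats 2000000 in
/-- **Concave Perron–Frobenius fixed point theorem** (Krause).
Let `K` be a closed convex cone in a Banach space `E` on which the norm is increasing for
the cone order (`y - x ∈ K → ‖x‖ ≤ ‖y‖`). Let `T : K → K` be concave with respect to the
cone order, and suppose there are `e ∈ K \ {0}` and constants `a, b > 0` with
`a•e ≤_K T(x) ≤_K b•e` for all `x ∈ K` of norm one. Then the iterates of the normalized
operator `T̃(x) = T(x)/‖T(x)‖` converge to a unique `x* ∈ K` of norm one from every
starting point `x ∈ K \ {0}`. -/

theorem concave_perron_frobenius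
    {E : Type*} [NormedAddCommGroup E] [NormedSpace ℝ E] [CompleteSpace E]
    (K : Set E) (hKclosed : IsClosed K) (hKconvex : Convex ℝ K)
    (hKcone : ∀ x ∈ K, ∀ c : ℝ, 0 ≤ c → c • x ∈ K)
    (hnorm_incr : ∀ x ∈ K, ∀ y ∈ K, y - x ∈ K → ‖x‖ ≤ ‖y‖)
    (T : E → E) (hTmap : ∀ x ∈ K, T x ∈ K)
    (hTconcave : ∀ μ : ℝ, 0 ≤ μ → μ ≤ 1 → ∀ x ∈ K, ∀ y ∈ K,
      T (μ • x + (1 - μ) • y) - (μ • T x + (1 - μ) • T y) ∈ K)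
    (e : E) (he : e ∈ K) (he0 : e ≠ 0) (a b : ℝ) (ha : 0 < a) (hb : 0 < b)
    (hbound : ∀ x ∈ K, ‖x‖ = 1 → T x - a • e ∈ K ∧ b • e - T x ∈ K) :
    ∃! xstar : E, xstar ∈ K ∧ ‖xstar‖ = 1 ∧
      ∀ x ∈ K, x ≠ 0 →
        Tendsto (fun k => (fun y => ‖T y‖⁻¹ • T y)^[k] x) atTop (𝓝 xstar) := by
  have hK0 : (0:E) ∈ K := by simpa using hKcone e he 0 le_rfl
  have hKadd : ∀ u ∈ K, ∀ v ∈ K, u + v ∈ K := by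
    intro u hu v hv
    have h := hKconvex hu hv (by norm_num : (0:ℝ) ≤ 1/2) (by norm_num : (0:ℝ) ≤ 1/2)
      (by norm_num)
    have h2 := hKcone _ h 2 (by norm_num)
    have : (2:ℝ) • ((1/2:ℝ) • u + (1/2:ℝ) • v) = u + v := by module
    rwa [this] at h2
  have hne : (0:ℝ) < ‖e‖ := norm_pos_iff.mpr he0
  -- a ≤ b
  have heu : ‖e‖⁻¹ • e ∈ K := hKcone e he _ (by positivity)
  have heu1 : ‖(‖e‖⁻¹ • e)‖ = 1 := by
    rw [norm_smul, Real.norm_eq_abs, abs_of_pos (by positivity)]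
    field_simp
  have hab : a ≤ b := by
    obtain ⟨h1, h2⟩ := hbound _ heu heu1
    have hTu := hTmap _ heu
    have hae : a • e ∈ K := hKcone e he a ha.le
    have hbe : b • e ∈ K := hKcone e he b hb.le
    have l1 : ‖a • e‖ ≤ ‖T (‖e‖⁻¹ • e)‖ := hnorm_incr _ hae _ hTu h1
    have l2 : ‖T (‖e‖⁻¹ • e)‖ ≤ ‖b • e‖ := hnorm_incr _ hTu _ hbe h2
    have : a * ‖e‖ ≤ b * ‖e‖ := by
      have := l1.trans l2
      rwa [norm_smul, norm_smul, Real.norm_eq_abs, Real.norm_eq_abs,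
        abs_of_pos ha, abs_of_pos hb] at this
    exact le_of_mul_le_mul_right (by simpa [mul_comm] using this) hne
  -- monotonicity of T
  have hTmono : ∀ x ∈ K, ∀ y ∈ K, x - y ∈ K → T x - T y ∈ K := by
    intro x hx y hy hxy
    have key : ∀ μ : ℝ, 0 ≤ μ → μ < 1 → T x - μ • T y ∈ K := by
      intro μ h0 h1
      set z := y + (1-μ)⁻¹ • (x - y) with hz
      have hzK : z ∈ K := hKadd _ hy _ (hKcone _ hxy _ (inv_nonneg.mpr (by linarith)))
      have hxz : μ • y + (1-μ) • z = x := by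
        rw [hz, smul_add, smul_smul, mul_inv_cancel₀ (by linarith)]
        module
      have hc := hTconcave μ h0 h1.le y hy z hzK
      rw [hxz] at hc
      have := hKadd _ hc _ (hKcone _ (hTmap _ hzK) (1-μ) (by linarith))
      have heq : T x - (μ • T y + (1 - μ) • T z) + (1 - μ) • T z = T x - μ • T y := by
        module
      rwa [heq] at this
    have htend : Tendsto (fun n : ℕ => T x - (1 - ((n:ℝ)+1)⁻¹) • T y) atTop
        (𝓝 (T x - T y)) := by
      have h1 : Tendsto (fun n : ℕ => 1 - ((n:ℝ)+1)⁻¹) atTop (𝓝 1) := by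
        have h0 : Tendsto (fun n : ℕ => ((n:ℝ)+1)⁻¹) atTop (𝓝 0) := by
          simpa [one_div] using (tendsto_one_div_add_atTop_nhds_zero_nat (𝕜 := ℝ))
        simpa using (tendsto_const_nhds (x := (1:ℝ))).sub h0
      have := (h1.smul_const (T y)).const_sub (T x)
      simpa using this
    refine hKclosed.mem_of_tendsto htend (Eventually.of_forall fun n => ?_)
    refine key _ ?_ ?_
    · have : ((n:ℝ)+1)⁻¹ ≤ 1 := by
        rw [inv_le_one_iff₀]; right; linarith [Nat.cast_nonneg (α := ℝ) n]
      linarith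
    · have : (0:ℝ) < ((n:ℝ)+1)⁻¹ := by positivity
      linarith
  -- Lemma A : points of norm >= 1 have T z >= a e
  have hLemA : ∀ z ∈ K, 1 ≤ ‖z‖ → T z - a • e ∈ K := by
    intro z hz hz1
    have hzn : (0:ℝ) < ‖z‖ := lt_of_lt_of_le one_pos hz1
    have huK : ‖z‖⁻¹ • z ∈ K := hKcone _ hz _ (inv_nonneg.mpr hzn.le)
    have hu1 : ‖(‖z‖⁻¹ • z)‖ = 1 := by
      rw [norm_smul, Real.norm_eq_abs, abs_of_pos (inv_pos.mpr hzn)]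
      field_simp
    have hdiff : z - ‖z‖⁻¹ • z ∈ K := by
      have heq : z - ‖z‖⁻¹ • z = (1 - ‖z‖⁻¹) • z := by module
      rw [heq]
      refine hKcone _ hz _ ?_
      have : ‖z‖⁻¹ ≤ 1 := by
        rw [inv_le_one_iff₀]; right; exact hz1
      linarith
    have h1 := hTmono _ hz _ huK hdiff
    have h2 := (hbound _ huK hu1).1
    have h3 := hKadd _ h1 _ h2
    have heq : T z - T (‖z‖⁻¹ • z) + (T (‖z‖⁻¹ • z) - a • e) = T z - a • e := by module
    rwa [heq] at h3
  -- T x is far from 0 for x in K, x ≠ 0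
  have hTpos : ∀ x ∈ K, x ≠ 0 → 0 < ‖T x‖ := by
    intro x hx hx0
    have hxn : (0:ℝ) < ‖x‖ := norm_pos_iff.mpr hx0
    have key : ∃ t : ℝ, 0 < t ∧ T x - t • (a • e) ∈ K := by
      rcases le_or_gt 1 ‖x‖ with h | h
      · exact ⟨1, one_pos, by simpa using hLemA x hx h⟩
      · refine ⟨‖x‖, hxn, ?_⟩
        have huK : ‖x‖⁻¹ • x ∈ K := hKcone _ hx _ (inv_nonneg.mpr hxn.le)
        have hu1 : ‖(‖x‖⁻¹ • x)‖ = 1 := by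
          rw [norm_smul, Real.norm_eq_abs, abs_of_pos (inv_pos.mpr hxn)]
          field_simp
        have hc := hTconcave ‖x‖ hxn.le h.le _ huK 0 hK0
        have hxe : ‖x‖ • (‖x‖⁻¹ • x) + (1 - ‖x‖) • (0:E) = x := by
          rw [smul_smul, mul_inv_cancel₀ hxn.ne']; module
        rw [hxe] at hc
        have h4 := hKadd _ hc _ (hKcone _ (hTmap _ hK0) (1 - ‖x‖) (by linarith))
        have h5 := hKadd _ h4 _ (hKcone _ ((hbound _ huK hu1).1) ‖x‖ hxn.le)
        have heq : T x - (‖x‖ • T (‖x‖⁻¹ • x) + (1 - ‖x‖) • T 0) + (1 - ‖x‖) • T 0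
            + ‖x‖ • (T (‖x‖⁻¹ • x) - a • e) = T x - ‖x‖ • (a • e) := by module
        rwa [heq] at h5
    obtain ⟨t, ht, htK⟩ := key
    have h6 : ‖t • (a • e)‖ ≤ ‖T x‖ :=
      hnorm_incr _ (hKcone _ (hKcone _ he a ha.le) t ht.le) _ (hTmap _ hx) htK
    have h7 : 0 < ‖t • (a • e)‖ := by
      rw [norm_smul, norm_smul]
      simp [Real.norm_eq_abs, abs_of_pos ht, abs_of_pos ha]
      positivity
    linarith
  set Gm : E → E := fun y => ‖T y‖⁻¹ • T y with hGmdef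
  set α : ℝ := a / (b * ‖e‖) with hαdef
  set β : ℝ := b / (a * ‖e‖) with hβdef
  have hα : 0 < α := by positivity
  have hβ : 0 < β := by positivity
  have hαβ : α ≤ β := by
    rw [hαdef, hβdef, div_le_div_iff₀ (by positivity) (by positivity)]
    have : a * a ≤ b * b := mul_le_mul hab hab ha.le hb.le
    nlinarith [hne]
  set P : E → Prop := fun x => x ∈ K ∧ ‖x‖ = 1 ∧ x - α • e ∈ K ∧ β • e - x ∈ K
    with hPdef
  -- Gm maps K \ {0} into the unit sphere of K
  have hGmU : ∀ x ∈ K, x ≠ 0 → Gm x ∈ K ∧ ‖Gm x‖ = 1 := by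
    intro x hx hx0
    have h := hTpos x hx hx0
    constructor
    · exact hKcone _ (hTmap _ hx) _ (inv_nonneg.mpr h.le)
    · rw [hGmdef]
      simp only [norm_smul, Real.norm_eq_abs, abs_of_pos (inv_pos.mpr h)]
      field_simp
  -- norm bounds on T x for unit x
  have hTnorm : ∀ x ∈ K, ‖x‖ = 1 → a * ‖e‖ ≤ ‖T x‖ ∧ ‖T x‖ ≤ b * ‖e‖ := by
    intro x hx hx1
    obtain ⟨h1, h2⟩ := hbound _ hx hx1
    constructor
    · have := hnorm_incr _ (hKcone _ he a ha.le) _ (hTmap _ hx) h1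
      rwa [norm_smul, Real.norm_eq_abs, abs_of_pos ha] at this
    · have := hnorm_incr _ (hTmap _ hx) _ (hKcone _ he b hb.le) h2
      rwa [norm_smul, Real.norm_eq_abs, abs_of_pos hb] at this
  -- Gm maps the unit sphere of K into P
  have hGmP : ∀ x ∈ K, ‖x‖ = 1 → P (Gm x) := by
    intro x hx hx1
    have hx0 : x ≠ 0 := by intro h; rw [h] at hx1; simp at hx1
    have hT := hTpos x hx hx0
    obtain ⟨hn1, hn2⟩ := hTnorm x hx hx1
    obtain ⟨hg1, hg2⟩ := hGmU x hx hx0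
    refine ⟨hg1, hg2, ?_, ?_⟩
    · have heq : Gm x - α • e = ‖T x‖⁻¹ • (T x - a • e) + (‖T x‖⁻¹ * a - α) • e := by
        rw [hGmdef]; module
      rw [heq]
      refine hKadd _ (hKcone _ (hbound _ hx hx1).1 _ (inv_nonneg.mpr hT.le)) _
        (hKcone _ he _ ?_)
      rw [sub_nonneg]
      have : α ≤ ‖T x‖⁻¹ * a := by
        rw [hαdef, inv_mul_eq_div, div_le_div_iff₀ (by positivity) hT]
        nlinarith
      linarith
    · have heq : β • e - Gm x = ‖T x‖⁻¹ • (b • e - T x) + (β - ‖T x‖⁻¹ * b) • e := by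
        rw [hGmdef]; module
      rw [heq]
      refine hKadd _ (hKcone _ (hbound _ hx hx1).2 _ (inv_nonneg.mpr hT.le)) _
        (hKcone _ he _ ?_)
      rw [hβdef, sub_nonneg, inv_mul_eq_div, div_le_div_iff₀ hT (by positivity)]
      nlinarith
  -- main concavity estimate
  have hLemMain : ∀ x ∈ K, ‖x‖ = 1 → ∀ y ∈ K, ‖y‖ = 1 → ∀ l : ℝ, 0 ≤ l → l ≤ 1 →
      x - l • y ∈ K → T x - (l • T y + (1 - l) • (a • e)) ∈ K := by
    intro x hx hx1 y hy hy1 l hl0 hl1 hK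
    rcases eq_or_lt_of_le hl1 with h | h
    · subst h
      have := hTmono _ hx _ hy (by simpa using hK)
      simpa using this
    · set z : E := (1 - l)⁻¹ • (x - l • y) with hzdef
      have hzK : z ∈ K := hKcone _ hK _ (inv_nonneg.mpr (by linarith))
      have hz1 : 1 ≤ ‖z‖ := by
        have hb1 : (1:ℝ) - l ≤ ‖x - l • y‖ := by
          have := norm_sub_norm_le x (l • y)
          rw [hx1, norm_smul, Real.norm_eq_abs, abs_of_nonneg hl0, hy1] at this
          linarith
        rw [hzdef, norm_smul, Real.norm_eq_abs,
          abs_of_pos (inv_pos.mpr (by linarith : (0:ℝ) < 1 - l))]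
        rw [le_inv_mul_iff₀ (by linarith : (0:ℝ) < 1 - l)]
        linarith
      have hTz := hLemA _ hzK hz1
      have hc := hTconcave l hl0 hl1 y hy z hzK
      have hxe : l • y + (1 - l) • z = x := by
        rw [hzdef, smul_smul, mul_inv_cancel₀ (by linarith : (1:ℝ) - l ≠ 0)]
        module
      rw [hxe] at hc
      have h4 := hKadd _ hc _ (hKcone _ hTz (1 - l) (by linarith))
      have heq : T x - (l • T y + (1 - l) • T z) + (1 - l) • (T z - a • e)
          = T x - (l • T y + (1 - l) • (a • e)) := by module
      rwa [heq] at h4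
  set c : ℝ := a / b with hcdef
  have hc0 : 0 < c := by rw [hcdef]; positivity
  have hc1 : c ≤ 1 := by rw [hcdef, div_le_one hb]; exact hab
  have hacb : a = c * b := by rw [hcdef]; field_simp
  -- one-step contraction
  have hLemStep : ∀ x y : E, P x → P y → ∀ l l' : ℝ, 0 ≤ l → l ≤ 1 → x - l • y ∈ K →
      0 ≤ l' → l' ≤ 1 → y - l' • x ∈ K →
      ∃ m m' : ℝ, 0 ≤ m ∧ m ≤ 1 ∧ Gm x - m • Gm y ∈ K ∧
        0 ≤ m' ∧ m' ≤ 1 ∧ Gm y - m' • Gm x ∈ K ∧ (l * l') ^ (1 - c) ≤ m * m' := by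
    intro x y hPx hPy l l' hl0 hl1 hlK hl'0 hl'1 hl'K
    obtain ⟨hx, hx1, -, -⟩ := hPx
    obtain ⟨hy, hy1, -, -⟩ := hPy
    have hx0 : x ≠ 0 := by intro h; rw [h] at hx1; simp at hx1
    have hy0 : y ≠ 0 := by intro h; rw [h] at hy1; simp at hy1
    have hTx : 0 < ‖T x‖ := hTpos x hx hx0
    have hTy : 0 < ‖T y‖ := hTpos y hy hy0
    -- T x ≥ (l + (1-l)c) T y  and symmetrically
    have claim : ∀ u v : E, u ∈ K → ‖u‖ = 1 → v ∈ K → ‖v‖ = 1 → ∀ t : ℝ, 0 ≤ t → t ≤ 1 →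
        u - t • v ∈ K → T u - (t + (1 - t) * c) • T v ∈ K := by
      intro u v hu hu1 hv hv1 t ht0 ht1 htK
      have h1 := hLemMain u hu hu1 v hv hv1 t ht0 ht1 htK
      have h2 : (1 - t) • (c • (b • e - T v)) ∈ K :=
        hKcone _ (hKcone _ (hbound _ hv hv1).2 c hc0.le) _ (by linarith)
      have h3 := hKadd _ h1 _ h2
      have heq : T u - (t • T v + (1 - t) • ((c * b) • e)) + (1 - t) • (c • (b • e - T v))
          = T u - (t + (1 - t) * c) • T v := by module
      rw [← hacb] at heq
      rwa [heq] at h3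
    have hclx := claim x y hx hx1 hy hy1 l hl0 hl1 hlK
    have hcly := claim y x hy hy1 hx hx1 l' hl'0 hl'1 hl'K
    have hφ0 : 0 ≤ l + (1 - l) * c := by
      have := mul_nonneg (by linarith : (0:ℝ) ≤ 1 - l) hc0.le
      linarith
    have hφ'0 : 0 ≤ l' + (1 - l') * c := by
      have := mul_nonneg (by linarith : (0:ℝ) ≤ 1 - l') hc0.le
      linarith
    have hKm : Gm x - ((l + (1 - l) * c) * (‖T y‖ / ‖T x‖)) • Gm y ∈ K := by
      have hsc : (l + (1 - l) * c) * (‖T y‖ / ‖T x‖) * ‖T y‖⁻¹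
          = ‖T x‖⁻¹ * (l + (1 - l) * c) := by field_simp
      have heq : Gm x - ((l + (1 - l) * c) * (‖T y‖ / ‖T x‖)) • Gm y
          = ‖T x‖⁻¹ • (T x - (l + (1 - l) * c) • T y) := by
        show ‖T x‖⁻¹ • T x - ((l + (1 - l) * c) * (‖T y‖ / ‖T x‖)) • (‖T y‖⁻¹ • T y) = _
        rw [smul_smul, hsc]; module
      rw [heq]
      exact hKcone _ hclx _ (inv_nonneg.mpr hTx.le)
    have hKm' : Gm y - ((l' + (1 - l') * c) * (‖T x‖ / ‖T y‖)) • Gm x ∈ K := by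
      have hsc : (l' + (1 - l') * c) * (‖T x‖ / ‖T y‖) * ‖T x‖⁻¹
          = ‖T y‖⁻¹ * (l' + (1 - l') * c) := by field_simp
      have heq : Gm y - ((l' + (1 - l') * c) * (‖T x‖ / ‖T y‖)) • Gm x
          = ‖T y‖⁻¹ • (T y - (l' + (1 - l') * c) • T x) := by
        show ‖T y‖⁻¹ • T y - ((l' + (1 - l') * c) * (‖T x‖ / ‖T y‖)) • (‖T x‖⁻¹ • T x) = _
        rw [smul_smul, hsc]; module
      rw [heq]
      exact hKcone _ hcly _ (inv_nonneg.mpr hTy.le)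
    have hm0 : 0 ≤ (l + (1 - l) * c) * (‖T y‖ / ‖T x‖) :=
      mul_nonneg hφ0 (by positivity)
    have hm'0 : 0 ≤ (l' + (1 - l') * c) * (‖T x‖ / ‖T y‖) :=
      mul_nonneg hφ'0 (by positivity)
    have hle1 : ∀ t : ℝ, 0 ≤ t → ∀ u v : E, u ∈ K → ‖u‖ = 1 → v ∈ K → ‖v‖ = 1 →
        u - t • v ∈ K → t ≤ 1 := by
      intro t ht0 u v hu hu1 hv hv1 htK
      have h1 := hnorm_incr _ (hKcone _ hv t ht0) _ hu htK
      rwa [norm_smul, Real.norm_eq_abs, abs_of_nonneg ht0, hv1, mul_one, hu1] at h1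
    obtain ⟨hgx, hgx1⟩ := hGmU x hx hx0
    obtain ⟨hgy, hgy1⟩ := hGmU y hy hy0
    refine ⟨(l + (1 - l) * c) * (‖T y‖ / ‖T x‖), (l' + (1 - l') * c) * (‖T x‖ / ‖T y‖),
      hm0, hle1 _ hm0 _ _ hgx hgx1 hgy hgy1 hKm, hKm,
      hm'0, hle1 _ hm'0 _ _ hgy hgy1 hgx hgx1 hKm', hKm', ?_⟩
    have hmm : (l + (1 - l) * c) * (‖T y‖ / ‖T x‖) * ((l' + (1 - l') * c) * (‖T x‖ / ‖T y‖))
        = (l + (1 - l) * c) * (l' + (1 - l') * c) := by field_simp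
    rw [hmm]
    have g1 : l ^ (1 - c) ≤ l + (1 - l) * c := by
      have := Real.geom_mean_le_arith_mean2_weighted (by linarith : (0:ℝ) ≤ 1 - c)
        hc0.le hl0 (zero_le_one) (by ring)
      rw [Real.one_rpow, mul_one] at this
      linarith [this]
    have g2 : l' ^ (1 - c) ≤ l' + (1 - l') * c := by
      have := Real.geom_mean_le_arith_mean2_weighted (by linarith : (0:ℝ) ≤ 1 - c)
        hc0.le hl'0 (zero_le_one) (by ring)
      rw [Real.one_rpow, mul_one] at this
      linarith [this]
    calc (l * l') ^ (1 - c) = l ^ (1 - c) * l' ^ (1 - c) := Real.mul_rpow hl0 hl'0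
      _ ≤ (l + (1 - l) * c) * (l' + (1 - l') * c) :=
        mul_le_mul g1 g2 (Real.rpow_nonneg hl'0 _) hφ0
  -- norm comparison
  have hLemNorm : ∀ x y : E, x ∈ K → ‖x‖ = 1 → y ∈ K → ‖y‖ = 1 → ∀ l l' : ℝ,
      0 ≤ l → l ≤ 1 → x - l • y ∈ K → 0 ≤ l' → l' ≤ 1 → y - l' • x ∈ K →
      ‖x - y‖ ≤ 3 * (1 - l * l') := by
    intro x y hx hx1 hy hy1 l l' hl0 hl1 hlK hl'0 hl'1 hl'K
    have hmem1 : x - y + (1 - l) • y ∈ K := by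
      have heq : x - y + (1 - l) • y = x - l • y := by module
      rw [heq]; exact hlK
    have hmem2 : (1 - l') • x + (1 - l) • y ∈ K :=
      hKadd _ (hKcone _ hx _ (by linarith)) _ (hKcone _ hy _ (by linarith))
    have hdiff : (1 - l') • x + (1 - l) • y - (x - y + (1 - l) • y) ∈ K := by
      have heq : (1 - l') • x + (1 - l) • y - (x - y + (1 - l) • y) = y - l' • x := by
        module
      rw [heq]; exact hl'K
    have h1 : ‖x - y + (1 - l) • y‖ ≤ ‖(1 - l') • x + (1 - l) • y‖ :=
      hnorm_incr _ hmem1 _ hmem2 hdiff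
    have h2 : ‖(1 - l') • x + (1 - l) • y‖ ≤ (1 - l') + (1 - l) := by
      refine (norm_add_le _ _).trans ?_
      rw [norm_smul, norm_smul, Real.norm_eq_abs, Real.norm_eq_abs, hx1, hy1,
        abs_of_nonneg (by linarith : (0:ℝ) ≤ 1 - l'),
        abs_of_nonneg (by linarith : (0:ℝ) ≤ 1 - l)]
      simp
    have h3 : ‖x - y‖ ≤ ‖x - y + (1 - l) • y‖ + ‖(1 - l) • y‖ := by
      have := norm_sub_le (x - y + (1 - l) • y) ((1 - l) • y)
      simpa using this
    have h4 : ‖(1 - l) • y‖ = 1 - l := by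
      rw [norm_smul, Real.norm_eq_abs, hy1, abs_of_nonneg (by linarith : (0:ℝ) ≤ 1 - l)]
      simp
    have h5 : l * l' ≤ l := by nlinarith
    have h6 : l * l' ≤ l' := by nlinarith
    linarith
  -- geometric decay of the projective gap along iterates
  have hKey : ∀ u v : E, P u → P v → ∀ k : ℕ, ∃ l l' : ℝ, 0 ≤ l ∧ l ≤ 1 ∧ 0 ≤ l' ∧ l' ≤ 1 ∧
      Gm^[k] u - l • Gm^[k] v ∈ K ∧ Gm^[k] v - l' • Gm^[k] u ∈ K ∧
      ((α / β) ^ 2) ^ ((1 - c) ^ k) ≤ l * l' ∧ P (Gm^[k] u) ∧ P (Gm^[k] v) := by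
    intro u v hPu hPv k
    induction k with
    | zero =>
      refine ⟨α / β, α / β, by positivity, by
        rw [div_le_one hβ]; exact hαβ, by positivity, by
        rw [div_le_one hβ]; exact hαβ, ?_, ?_, ?_, hPu, hPv⟩
      · have hγβe : (α / β) • (β • e) = α • e := by
          rw [smul_smul, div_mul_cancel₀ _ hβ.ne']
        have heq : u - (α / β) • v = (u - α • e) + ((α / β) • (β • e) - (α / β) • v) := by
          rw [hγβe]; module
        have heq2 : (α / β) • (β • e) - (α / β) • v = (α / β) • (β • e - v) := by module
        simp only [Function.iterate_zero_apply]
        rw [heq, heq2]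
        exact hKadd _ hPu.2.2.1 _ (hKcone _ hPv.2.2.2 _ (by positivity))
      · have hγβe : (α / β) • (β • e) = α • e := by
          rw [smul_smul, div_mul_cancel₀ _ hβ.ne']
        have heq : v - (α / β) • u = (v - α • e) + ((α / β) • (β • e) - (α / β) • u) := by
          rw [hγβe]; module
        have heq2 : (α / β) • (β • e) - (α / β) • u = (α / β) • (β • e - u) := by module
        simp only [Function.iterate_zero_apply]
        rw [heq, heq2]
        exact hKadd _ hPv.2.2.1 _ (hKcone _ hPu.2.2.2 _ (by positivity))
      · rw [pow_zero, Real.rpow_one]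
        have : (α / β) ^ 2 = (α / β) * (α / β) := sq (α / β) ▸ by ring
        rw [this]
    | succ k ih =>
      obtain ⟨l, l', hl0, hl1, hl'0, hl'1, hlK, hl'K, hprod, hPku, hPkv⟩ := ih
      obtain ⟨m, m', hm0, hm1, hmK, hm'0, hm'1, hm'K, hstep⟩ :=
        hLemStep _ _ hPku hPkv l l' hl0 hl1 hlK hl'0 hl'1 hl'K
      refine ⟨m, m', hm0, hm1, hm'0, hm'1, ?_, ?_, ?_, ?_, ?_⟩
      · rw [Function.iterate_succ_apply', Function.iterate_succ_apply']
        exact hmK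
      · rw [Function.iterate_succ_apply', Function.iterate_succ_apply']
        exact hm'K
      · have h1 : (((α / β) ^ 2) ^ ((1 - c) ^ k)) ^ (1 - c) ≤ (l * l') ^ (1 - c) :=
          Real.rpow_le_rpow (Real.rpow_nonneg (by positivity) _) hprod (by linarith)
        have h2 : (((α / β) ^ 2) ^ ((1 - c) ^ k)) ^ (1 - c)
            = ((α / β) ^ 2) ^ ((1 - c) ^ (k + 1)) := by
          rw [← Real.rpow_mul (by positivity), ← pow_succ]
        linarith [hstep]
      · rw [Function.iterate_succ_apply']
        exact hGmP _ hPku.1 hPku.2.1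
      · rw [Function.iterate_succ_apply']
        exact hGmP _ hPkv.1 hPkv.2.1
  set s₀ : ℝ := (α / β) ^ 2 with hs₀def
  have hs₀pos : 0 < s₀ := by positivity
  have hs₀le1 : s₀ ≤ 1 := pow_le_one₀ (le_of_lt (div_pos hα hβ))
    (by rw [div_le_one hβ]; exact hαβ)
  set C : ℝ := 3 * Real.log s₀⁻¹ with hCdef
  have hC0 : 0 ≤ C := by
    have h1 : (1:ℝ) ≤ s₀⁻¹ := (one_le_inv₀ hs₀pos).mpr hs₀le1
    have := Real.log_nonneg h1
    rw [hCdef]; linarith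
  have hr0 : 0 ≤ 1 - c := by linarith
  have hr1 : 1 - c < 1 := by linarith
  -- norm distance bound between iterates
  have hdist : ∀ u v : E, P u → P v → ∀ k : ℕ,
      ‖Gm^[k] u - Gm^[k] v‖ ≤ C * (1 - c) ^ k := by
    intro u v hPu hPv k
    obtain ⟨l, l', hl0, hl1, hl'0, hl'1, hlK, hl'K, hprod, hPku, hPkv⟩ := hKey u v hPu hPv k
    have h1 := hLemNorm _ _ hPku.1 hPku.2.1 hPkv.1 hPkv.2.1 l l' hl0 hl1 hlK hl'0 hl'1 hl'K
    have hp : (0:ℝ) < s₀ ^ ((1 - c) ^ k) := Real.rpow_pos_of_pos hs₀pos _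
    have h2 : Real.log (s₀ ^ ((1 - c) ^ k)) ≤ s₀ ^ ((1 - c) ^ k) - 1 :=
      Real.log_le_sub_one_of_pos hp
    have h3 : Real.log (s₀ ^ ((1 - c) ^ k)) = ((1 - c) ^ k) * Real.log s₀ :=
      Real.log_rpow hs₀pos _
    have h4 : Real.log s₀⁻¹ = - Real.log s₀ := Real.log_inv s₀
    have h5 : 1 - l * l' ≤ ((1 - c) ^ k) * Real.log s₀⁻¹ := by
      rw [h4, mul_neg]
      linarith
    have h6 : C * (1 - c) ^ k = 3 * (((1 - c) ^ k) * Real.log s₀⁻¹) := by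
      rw [hCdef]; ring
    rw [h6]
    linarith
  -- the canonical start
  have hPz₀ : P (Gm (‖e‖⁻¹ • e)) := hGmP _ heu heu1
  have hPiter : ∀ w : E, P w → ∀ k : ℕ, P (Gm^[k] w) := by
    intro w hw k
    induction k with
    | zero => simpa using hw
    | succ k ih => rw [Function.iterate_succ_apply']; exact hGmP _ ih.1 ih.2.1
  have hcauchy : CauchySeq (fun k => Gm^[k] (Gm (‖e‖⁻¹ • e))) := by
    apply cauchySeq_of_le_geometric (1 - c) C hr1
    intro n
    rw [dist_eq_norm]
    have h := hdist _ (Gm (Gm (‖e‖⁻¹ • e))) hPz₀ (hGmP _ hPz₀.1 hPz₀.2.1) n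
    have he2 : Gm^[n] (Gm (Gm (‖e‖⁻¹ • e))) = Gm^[n + 1] (Gm (‖e‖⁻¹ • e)) :=
      (Function.iterate_succ_apply Gm n _).symm
    rwa [he2] at h
  obtain ⟨xstar, hxtend⟩ := cauchySeq_tendsto_of_complete hcauchy
  have hxK : xstar ∈ K := hKclosed.mem_of_tendsto hxtend
    (Eventually.of_forall fun k => (hPiter _ hPz₀ k).1)
  have hx1 : ‖xstar‖ = 1 := by
    have h1 : Tendsto (fun k => ‖Gm^[k] (Gm (‖e‖⁻¹ • e))‖) atTop (𝓝 ‖xstar‖) := hxtend.norm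
    have h2 : (fun k => ‖Gm^[k] (Gm (‖e‖⁻¹ • e))‖) = fun _ => (1:ℝ) :=
      funext fun k => (hPiter _ hPz₀ k).2.1
    rw [h2] at h1
    exact tendsto_nhds_unique h1 tendsto_const_nhds
  have hconvP : ∀ w : E, P w → Tendsto (fun k => Gm^[k] w) atTop (𝓝 xstar) := by
    intro w hw
    have hdiff0 : Tendsto (fun k => Gm^[k] w - Gm^[k] (Gm (‖e‖⁻¹ • e))) atTop (𝓝 0) := by
      rw [tendsto_zero_iff_norm_tendsto_zero]
      have hg : Tendsto (fun k : ℕ => C * (1 - c) ^ k) atTop (𝓝 0) := by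
        simpa using (tendsto_pow_atTop_nhds_zero_of_lt_one hr0 hr1).const_mul C
      exact squeeze_zero (fun k => norm_nonneg _) (fun k => hdist w _ hw hPz₀ k) hg
    have := hdiff0.add hxtend
    simpa using this
  have hmain : ∀ x ∈ K, x ≠ 0 → Tendsto (fun k => Gm^[k] x) atTop (𝓝 xstar) := by
    intro x hx hx0
    obtain ⟨hg1, hg2⟩ := hGmU x hx hx0
    have hP2 : P (Gm (Gm x)) := hGmP _ hg1 hg2
    have h := hconvP _ hP2
    rw [← Filter.tendsto_add_atTop_iff_nat 2]
    have heq : (fun n : ℕ => Gm^[n + 2] x) = fun n => Gm^[n] (Gm (Gm x)) := by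
      funext n
      rw [Function.iterate_add_apply]
      rfl
    rw [heq]
    exact h
  refine ⟨xstar, ⟨hxK, hx1, hmain⟩, ?_⟩
  rintro y ⟨-, -, hy⟩
  exact tendsto_nhds_unique (hy e he he0) (hmain e he he0)
end

section
/- For 0 < ρ < 1 and unit vectors s₁,…,sₙ ∈ R^p, the normalized regularized Tyler iteration Σ̂_{j+1} = T(Σ̂_j)/(Tr(T(Σ̂_j))/p), where T(Σ) = (1-ρ)(p/n) Σᵢ sᵢsᵢ^T/(sᵢ^T Σ^{-1} sᵢ) + ρI, converges to a unique positive definite limit with trace p, independent of the positive definite initial matrix Σ̂₀. -/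
open Matrix Finset Filter Topology

/-- The regularized Tyler map
`T(Σ) = (1-ρ)(p/n) Σᵢ sᵢsᵢᵀ/(sᵢᵀ Σ⁻¹ sᵢ) + ρ I`. -/
noncomputable def tylerMap {p n : ℕ} (s : Fin n → Fin p → ℝ) (ρ : ℝ)
    (A : Matrix (Fin p) (Fin p) ℝ) : Matrix (Fin p) (Fin p) ℝ :=
  ((1 - ρ) * ((p : ℝ) / (n : ℝ))) •
      ∑ i, (1 / (s i ⬝ᵥ A⁻¹.mulVec (s i))) • vecMulVec (s i) (s i) + ρ • 1

/-- One step of the iteration: apply `T` and renormalize the trace to `p`. -/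
noncomputable def tylerIter {p n : ℕ} (s : Fin n → Fin p → ℝ) (ρ : ℝ)
    (A : Matrix (Fin p) (Fin p) ℝ) : Matrix (Fin p) (Fin p) ℝ :=
  ((p : ℝ) / (tylerMap s ρ A).trace) • tylerMap s ρ A

namespace TylerAux

variable {p n : ℕ}

/-! ### Quadratic forms -/

noncomputable def Qf (x : Fin p → ℝ) (A : Matrix (Fin p) (Fin p) ℝ) : ℝ := x ⬝ᵥ A.mulVec x

lemma Qf_add (x : Fin p → ℝ) (A B : Matrix (Fin p) (Fin p) ℝ) :
    Qf x (A + B) = Qf x A + Qf x B := by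
  simp [Qf, Matrix.add_mulVec, dotProduct_add]

lemma Qf_smul (x : Fin p → ℝ) (r : ℝ) (A : Matrix (Fin p) (Fin p) ℝ) :
    Qf x (r • A) = r * Qf x A := by
  simp [Qf, Matrix.smul_mulVec, dotProduct_smul, smul_eq_mul]

lemma Qf_sum {ι : Type*} (x : Fin p → ℝ) (t : Finset ι) (f : ι → Matrix (Fin p) (Fin p) ℝ) :
    Qf x (∑ i ∈ t, f i) = ∑ i ∈ t, Qf x (f i) := by
  classical
  induction t using Finset.induction with
  | empty => simp [Qf]
  | insert _ _ h ih => simp [Finset.sum_insert h, Qf_add, ih]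

lemma Qf_one (x : Fin p → ℝ) : Qf x (1 : Matrix (Fin p) (Fin p) ℝ) = x ⬝ᵥ x := by
  simp [Qf]

lemma Qf_vecMulVec (x u : Fin p → ℝ) : Qf x (vecMulVec u u) = (u ⬝ᵥ x) ^ 2 := by
  simp only [Qf, Matrix.mulVec, dotProduct, vecMulVec_apply]
  rw [show (∑ i, x i * ∑ j, u i * u j * x j) = (∑ i, x i * u i) * (∑ j, u j * x j) by
    rw [Finset.sum_mul]; refine Finset.sum_congr rfl fun i _ => ?_
    rw [Finset.mul_sum, Finset.mul_sum]; refine Finset.sum_congr rfl fun j _ => ?_; ring]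
  rw [sq]; congr 1 <;> (apply Finset.sum_congr rfl; intros; ring)

lemma Qf_pos {A : Matrix (Fin p) (Fin p) ℝ} (hA : A.PosDef) {x : Fin p → ℝ} (hx : x ≠ 0) :
    0 < Qf x A := by
  have := hA.dotProduct_mulVec_pos hx
  simpa [Qf] using this

lemma Qf_nonneg {A : Matrix (Fin p) (Fin p) ℝ} (hA : A.PosSemidef) (x : Fin p → ℝ) :
    0 ≤ Qf x A := by
  have := hA.dotProduct_mulVec_nonneg x
  simpa [Qf] using this

lemma dot_self_nonneg (x : Fin p → ℝ) : 0 ≤ x ⬝ᵥ x :=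
  Finset.sum_nonneg fun i _ => mul_self_nonneg (x i)

lemma dot_self_pos {x : Fin p → ℝ} (hx : x ≠ 0) : 0 < x ⬝ᵥ x := by
  obtain ⟨i, hi⟩ := Function.ne_iff.mp hx
  exact Finset.sum_pos' (fun j _ => mul_self_nonneg (x j))
    ⟨i, Finset.mem_univ i, mul_self_pos.mpr hi⟩

lemma bil_symm {A : Matrix (Fin p) (Fin p) ℝ} (hA : Aᵀ = A) (u v : Fin p → ℝ) :
    u ⬝ᵥ A.mulVec v = v ⬝ᵥ A.mulVec u := by
  rw [Matrix.dotProduct_mulVec, ← Matrix.mulVec_transpose, hA, dotProduct_comm]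

/-- Cauchy–Schwarz for a positive semidefinite symmetric bilinear form. -/
lemma cs_psd {A : Matrix (Fin p) (Fin p) ℝ} (hA : Aᵀ = A)
    (hpsd : ∀ x, 0 ≤ x ⬝ᵥ A.mulVec x) (u v : Fin p → ℝ) :
    (u ⬝ᵥ A.mulVec v) ^ 2 ≤ (u ⬝ᵥ A.mulVec u) * (v ⬝ᵥ A.mulVec v) := by
  set a := u ⬝ᵥ A.mulVec u
  set b := u ⬝ᵥ A.mulVec v
  set c := v ⬝ᵥ A.mulVec v
  have key : ∀ t : ℝ, 0 ≤ a - 2 * t * b + t ^ 2 * c := by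
    intro t
    have h := hpsd (u - t • v)
    have expand : (u - t • v) ⬝ᵥ A.mulVec (u - t • v) = a - 2 * t * b + t ^ 2 * c := by
      rw [Matrix.mulVec_sub, Matrix.mulVec_smul, sub_dotProduct, smul_dotProduct,
        dotProduct_sub, dotProduct_sub, dotProduct_smul, dotProduct_smul, smul_eq_mul,
        smul_eq_mul, smul_eq_mul, bil_symm hA v u]
      ring
    rw [expand] at h; exact h
  have ha : 0 ≤ a := hpsd u
  have hc : 0 ≤ c := hpsd v
  rcases lt_or_eq_of_le hc with hc' | hc'
  · have h := key (b / c)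
    have h2 : c * (a - 2 * (b / c) * b + (b / c) ^ 2 * c) = a * c - b ^ 2 := by
      field_simp; ring
    nlinarith [mul_nonneg hc'.le h]
  · have hc0 : c = 0 := hc'.symm
    have hb : b = 0 := by
      by_contra hb
      have h := key ((a + 1) / (2 * b))
      rw [hc0] at h
      have : a - 2 * ((a + 1) / (2 * b)) * b = -1 := by field_simp; ring
      nlinarith [h]
    rw [hb, hc0]; norm_num

lemma posdef_symm {A : Matrix (Fin p) (Fin p) ℝ} (hA : A.PosDef) : Aᵀ = A := hA.isHermitian

/-- quadratic form bounded by trace times norm squared, for PSD matrices -/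
lemma Qf_le_trace {A : Matrix (Fin p) (Fin p) ℝ} (hA : A.PosSemidef) (x : Fin p → ℝ) :
    Qf x A ≤ A.trace * (x ⬝ᵥ x) := by
  obtain ⟨B, rfl⟩ : ∃ B : Matrix (Fin p) (Fin p) ℝ, A = Bᴴ * B := by
    open scoped MatrixOrder in
    exact CStarAlgebra.nonneg_iff_eq_star_mul_self.mp hA.nonneg
  have hq : Qf x (Bᴴ * B) = (B.mulVec x) ⬝ᵥ (B.mulVec x) := by
    rw [Qf, ← Matrix.mulVec_mulVec, Matrix.dotProduct_mulVec]
    congr 1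
    rw [show (Bᴴ : Matrix (Fin p) (Fin p) ℝ) = Bᵀ from rfl, Matrix.vecMul_transpose]
  have htr : (Bᴴ * B).trace = ∑ i, ∑ j, B i j ^ 2 := by
    rw [Matrix.trace]
    simp only [Matrix.diag_apply, Matrix.mul_apply, conjTranspose_apply, star_trivial]
    rw [Finset.sum_comm]
    refine Finset.sum_congr rfl fun i _ => Finset.sum_congr rfl fun j _ => by ring
  rw [hq, htr]
  have hrow : ∀ i, (B.mulVec x i) ^ 2 ≤ (∑ j, B i j ^ 2) * (x ⬝ᵥ x) := by
    intro i
    have h := Finset.sum_mul_sq_le_sq_mul_sq Finset.univ (fun j => B i j) x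
    simpa [Matrix.mulVec, dotProduct, pow_two] using h
  calc (B.mulVec x) ⬝ᵥ (B.mulVec x) = ∑ i, (B.mulVec x i) ^ 2 := by
        simp [dotProduct, pow_two]
    _ ≤ ∑ i, (∑ j, B i j ^ 2) * (x ⬝ᵥ x) := Finset.sum_le_sum fun i _ => hrow i
    _ = (∑ i, ∑ j, B i j ^ 2) * (x ⬝ᵥ x) := by rw [Finset.sum_mul]

/-! ### Sandwich constants -/

lemma Qf_single (A : Matrix (Fin p) (Fin p) ℝ) (i : Fin p) :
    Qf (Pi.single i 1) A = A i i := by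
  simp [Qf, Matrix.mulVec_single, single_dotProduct]

lemma trace_eq_sum_Qf (A : Matrix (Fin p) (Fin p) ℝ) :
    A.trace = ∑ i, Qf (Pi.single i 1) A := by
  simp [Matrix.trace, Qf_single, Matrix.diag_apply]

/-- the set of upper sandwich constants -/
def SS (A B : Matrix (Fin p) (Fin p) ℝ) : Set ℝ := {l | ∀ x, Qf x A ≤ l * Qf x B}

noncomputable def MM (A B : Matrix (Fin p) (Fin p) ℝ) : ℝ := sInf (SS A B)

lemma SS_ge_one {A B : Matrix (Fin p) (Fin p) ℝ} (hp : 0 < p)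
    (hA : A.trace = p) (hB : B.trace = p) {l : ℝ} (hl : l ∈ SS A B) : 1 ≤ l := by
  have h : A.trace ≤ l * B.trace := by
    rw [trace_eq_sum_Qf, trace_eq_sum_Qf, Finset.mul_sum]
    exact Finset.sum_le_sum fun i _ => hl (Pi.single i 1)
  rw [hA, hB] at h
  have hp' : (0 : ℝ) < p := Nat.cast_pos.mpr hp
  nlinarith

lemma MM_one_le {A B : Matrix (Fin p) (Fin p) ℝ} (hp : 0 < p)
    (hA : A.trace = p) (hB : B.trace = p) (hne : (SS A B).Nonempty) : 1 ≤ MM A B :=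
  le_csInf hne fun _ hl => SS_ge_one hp hA hB hl

lemma MM_le {A B : Matrix (Fin p) (Fin p) ℝ} (hp : 0 < p)
    (hA : A.trace = p) (hB : B.trace = p) {l : ℝ} (hl : l ∈ SS A B) : MM A B ≤ l :=
  csInf_le ⟨1, fun _ hm => SS_ge_one hp hA hB hm⟩ hl

/-- the inf is itself a sandwich constant -/
lemma MM_spec {A B : Matrix (Fin p) (Fin p) ℝ} (hne : (SS A B).Nonempty)
    (hBpsd : ∀ x, 0 ≤ Qf x B) : ∀ x, Qf x A ≤ MM A B * Qf x B := by
  intro x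
  have key : ∀ ε > (0:ℝ), Qf x A ≤ (MM A B + ε) * Qf x B := by
    intro ε hε
    obtain ⟨l, hl, hlt⟩ := exists_lt_of_csInf_lt hne (lt_add_of_pos_right (MM A B) hε)
    exact (hl x).trans (mul_le_mul_of_nonneg_right hlt.le (hBpsd x))
  rcases eq_or_lt_of_le (hBpsd x) with h0 | h0
  · have h1 := key 1 one_pos
    rw [← h0] at h1 ⊢
    simpa using h1
  · refine le_of_forall_pos_le_add fun δ hδ => ?_
    have := key (δ / Qf x B) (div_pos hδ h0)
    calc Qf x A ≤ (MM A B + δ / Qf x B) * Qf x B := this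
      _ = MM A B * Qf x B + δ := by field_simp

/-! ### Inverse anti-monotonicity -/

lemma inv_anti {A B : Matrix (Fin p) (Fin p) ℝ} (hA : A.PosDef) (hB : B.PosDef)
    {M : ℝ} (hM : 0 < M) (h : ∀ x, Qf x A ≤ M * Qf x B) :
    ∀ x, Qf x B⁻¹ ≤ M * Qf x A⁻¹ := by
  intro x
  have hAdet : IsUnit A.det := A.isUnit_iff_isUnit_det.mp hA.isUnit
  have hBdet : IsUnit B.det := B.isUnit_iff_isUnit_det.mp hB.isUnit
  have hAA : A * A⁻¹ = 1 := Matrix.mul_nonsing_inv A hAdet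
  have hBB : B * B⁻¹ = 1 := Matrix.mul_nonsing_inv B hBdet
  set u : Fin p → ℝ := M⁻¹ • (B⁻¹.mulVec x) with hu
  have hBsym : B⁻¹ᵀ = B⁻¹ := hB.inv.isHermitian
  have ht : u ⬝ᵥ x = M⁻¹ * Qf x B⁻¹ := by
    rw [hu, smul_dotProduct, smul_eq_mul, Qf, dotProduct_comm]
  have hux : u ⬝ᵥ A.mulVec (A⁻¹.mulVec x) = u ⬝ᵥ x := by
    rw [Matrix.mulVec_mulVec, hAA, Matrix.one_mulVec]
  have hQAinv : (A⁻¹.mulVec x) ⬝ᵥ A.mulVec (A⁻¹.mulVec x) = Qf x A⁻¹ := by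
    rw [Matrix.mulVec_mulVec, hAA, Matrix.one_mulVec, Qf, dotProduct_comm]
  have hQuB : Qf u B = M⁻¹ * M⁻¹ * Qf x B⁻¹ := by
    rw [Qf, hu, Matrix.mulVec_smul, smul_dotProduct, dotProduct_smul, smul_eq_mul, smul_eq_mul,
      Matrix.mulVec_mulVec, hBB, Matrix.one_mulVec, ← mul_assoc]
    congr 1
    rw [Qf, dotProduct_comm]
  set Q : ℝ := Qf x B⁻¹ with hQ
  set R : ℝ := Qf x A⁻¹ with hR
  have hQuA : Qf u A ≤ M⁻¹ * Q := by
    have h1 := h u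
    rw [hQuB] at h1
    have h2 : M * (M⁻¹ * M⁻¹ * Q) = M⁻¹ * Q := by
      field_simp
    linarith [h2 ▸ h1]
  have hCS := cs_psd (posdef_symm hA) (fun y => Qf_nonneg hA.posSemidef y) u (A⁻¹.mulVec x)
  rw [hux, hQAinv, ht] at hCS
  have hCS' : (M⁻¹ * Q) ^ 2 ≤ Qf u A * R := hCS
  have hBinv_nonneg : 0 ≤ Q := Qf_nonneg hB.inv.posSemidef x
  have hAinv_nonneg : 0 ≤ R := Qf_nonneg hA.inv.posSemidef x
  have hMM : M * M⁻¹ = 1 := mul_inv_cancel₀ hM.ne'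
  rcases eq_or_lt_of_le hBinv_nonneg with h0 | h0
  · rw [← h0]; positivity
  · have ht' : 0 < M⁻¹ * Q := by positivity
    have hQuA' : (0:ℝ) ≤ Qf u A := Qf_nonneg hA.posSemidef u
    have h3 : (M⁻¹ * Q) ^ 2 ≤ (M⁻¹ * Q) * R :=
      hCS'.trans (mul_le_mul_of_nonneg_right hQuA hAinv_nonneg)
    have h4 : M⁻¹ * Q ≤ R := by nlinarith [h3, ht']
    calc Q = M * (M⁻¹ * Q) := by rw [← mul_assoc, hMM, one_mul]
      _ ≤ M * R := mul_le_mul_of_nonneg_left h4 hM.le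


/-! ### The Tyler map -/

section Tyler

variable (s : Fin n → Fin p → ℝ) (ρ : ℝ)

/-- `sᵢᵀ A⁻¹ sᵢ` -/
noncomputable def dd (A : Matrix (Fin p) (Fin p) ℝ) (i : Fin n) : ℝ :=
  s i ⬝ᵥ A⁻¹.mulVec (s i)

lemma Qf_tylerMap (A : Matrix (Fin p) (Fin p) ℝ) (x : Fin p → ℝ) :
    Qf x (tylerMap s ρ A)
      = (1 - ρ) * ((p : ℝ) / n) * ∑ i, (1 / dd s A i) * (s i ⬝ᵥ x) ^ 2 + ρ * (x ⬝ᵥ x) := by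
  rw [tylerMap, Qf_add, Qf_smul, Qf_smul, Qf_one, Qf_sum]
  simp only [Qf_smul, Qf_vecMulVec, dd]

lemma trace_vecMulVec_self (u : Fin p → ℝ) : (vecMulVec u u).trace = u ⬝ᵥ u := by
  simp [Matrix.trace, Matrix.diag, vecMulVec_apply, dotProduct]

lemma trace_tylerMap (hs : ∀ i, s i ⬝ᵥ s i = 1) (A : Matrix (Fin p) (Fin p) ℝ) :
    (tylerMap s ρ A).trace
      = (1 - ρ) * ((p : ℝ) / n) * (∑ i, 1 / dd s A i) + ρ * p := by
  rw [tylerMap, Matrix.trace_add, Matrix.trace_smul, Matrix.trace_smul, Matrix.trace_one,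
    Matrix.trace_sum]
  simp only [Matrix.trace_smul, trace_vecMulVec_self, hs, smul_eq_mul, mul_one,
    Fintype.card_fin, dd, one_div]

lemma s_ne_zero {i : Fin n} (hsi : s i ⬝ᵥ s i = 1) : s i ≠ 0 := by
  intro h0
  rw [h0] at hsi
  simp at hsi

lemma dd_pos {A : Matrix (Fin p) (Fin p) ℝ} (hA : A.PosDef) {i : Fin n}
    (hsi : s i ⬝ᵥ s i = 1) : 0 < dd s A i :=
  Qf_pos hA.inv (s_ne_zero s hsi)

/-- On trace-`p` positive matrices the weights are bounded by `p`. -/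
lemma w_le {A : Matrix (Fin p) (Fin p) ℝ} (hA : A.PosDef) (htr : A.trace = p)
    {i : Fin n} (hsi : s i ⬝ᵥ s i = 1) : 1 / dd s A i ≤ p := by
  have hd := dd_pos s hA hsi
  have hAA : A * A⁻¹ = 1 := Matrix.mul_nonsing_inv A (A.isUnit_iff_isUnit_det.mp hA.isUnit)
  have hQs : Qf (s i) A ≤ p := by
    have h := Qf_le_trace hA.posSemidef (s i)
    rwa [htr, hsi, mul_one] at h
  have hcs := cs_psd (posdef_symm hA) (fun y => Qf_nonneg hA.posSemidef y)
    (s i) (A⁻¹.mulVec (s i))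
  rw [Matrix.mulVec_mulVec, hAA, Matrix.one_mulVec, hsi] at hcs
  have hQd : (A⁻¹.mulVec (s i)) ⬝ᵥ (s i) = dd s A i := by
    rw [dd, dotProduct_comm]
  rw [hQd] at hcs
  have h1 : 1 ≤ Qf (s i) A * dd s A i := by
    have h' := hcs; rw [one_pow] at h'; exact h'
  rw [div_le_iff₀ hd]
  nlinarith [hQs, hd, h1]

/-- Invariant properties of the iterates. -/
structure Good (A : Matrix (Fin p) (Fin p) ℝ) : Prop where
  pd : A.PosDef
  tr : A.trace = p
  lb : ∃ ε > 0, ∀ x, ε * (x ⬝ᵥ x) ≤ Qf x A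

lemma dd_nonneg {A : Matrix (Fin p) (Fin p) ℝ} (hA : A.PosDef) (i : Fin n) :
    0 ≤ dd s A i := Qf_nonneg hA.inv.posSemidef (s i)

lemma trace_tylerMap_pos (hp : 0 < p) (hs : ∀ i, s i ⬝ᵥ s i = 1)
    (hρ0 : 0 < ρ) (hρ1 : ρ < 1) {A : Matrix (Fin p) (Fin p) ℝ} (hA : A.PosDef) :
    0 < (tylerMap s ρ A).trace := by
  rw [trace_tylerMap s ρ hs]
  have hpR : (0:ℝ) < p := Nat.cast_pos.mpr hp
  have h1 : (0:ℝ) ≤ (1 - ρ) * ((p : ℝ) / n) := by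
    have : (0:ℝ) ≤ (p : ℝ) / n := by positivity
    nlinarith
  have h2 : 0 ≤ ∑ i, 1 / dd s A i :=
    Finset.sum_nonneg fun i _ => one_div_nonneg.mpr (dd_nonneg s hA i)
  nlinarith [mul_nonneg h1 h2]

lemma tylerMap_symm (A : Matrix (Fin p) (Fin p) ℝ) :
    (tylerMap s ρ A)ᵀ = tylerMap s ρ A := by
  have h1 : ∀ i, (vecMulVec (s i) (s i))ᵀ = vecMulVec (s i) (s i) := by
    intro i; ext a b; simp [Matrix.transpose_apply, vecMulVec_apply, mul_comm]
  rw [tylerMap, Matrix.transpose_add, Matrix.transpose_smul, Matrix.transpose_smul,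
    Matrix.transpose_one, Matrix.transpose_sum]
  simp only [Matrix.transpose_smul, h1]

lemma tylerMap_hermitian (A : Matrix (Fin p) (Fin p) ℝ) :
    (tylerMap s ρ A).IsHermitian := by
  have h := tylerMap_symm s ρ A
  rw [Matrix.IsHermitian]
  ext a b
  rw [Matrix.conjTranspose_apply, star_trivial]
  simpa [Matrix.transpose_apply] using congrFun (congrFun h a) b

lemma Qf_tylerMap_lower (hρ0 : 0 < ρ) (hρ1 : ρ < 1)
    {A : Matrix (Fin p) (Fin p) ℝ} (hA : A.PosDef) (x : Fin p → ℝ) :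
    ρ * (x ⬝ᵥ x) ≤ Qf x (tylerMap s ρ A) := by
  rw [Qf_tylerMap]
  have h1 : (0:ℝ) ≤ (1 - ρ) * ((p : ℝ) / n) := by
    have : (0:ℝ) ≤ (p : ℝ) / n := by positivity
    nlinarith
  have h2 : 0 ≤ ∑ i, (1 / dd s A i) * (s i ⬝ᵥ x) ^ 2 :=
    Finset.sum_nonneg fun i _ => by
      have := dd_nonneg s hA i
      positivity
  nlinarith [mul_nonneg h1 h2]

lemma tylerMap_posDef (hρ0 : 0 < ρ) (hρ1 : ρ < 1)
    {A : Matrix (Fin p) (Fin p) ℝ} (hA : A.PosDef) : (tylerMap s ρ A).PosDef := by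
  refine Matrix.PosDef.of_dotProduct_mulVec_pos (tylerMap_hermitian s ρ A) fun x hx => ?_
  have h := Qf_tylerMap_lower s ρ hρ0 hρ1 hA x
  have h2 : 0 < ρ * (x ⬝ᵥ x) := mul_pos hρ0 (dot_self_pos hx)
  simpa [Qf] using lt_of_lt_of_le h2 h

lemma trace_tylerIter (hp : 0 < p) (hs : ∀ i, s i ⬝ᵥ s i = 1)
    (hρ0 : 0 < ρ) (hρ1 : ρ < 1) {A : Matrix (Fin p) (Fin p) ℝ} (hA : A.PosDef) :
    (tylerIter s ρ A).trace = p := by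
  have ht := trace_tylerMap_pos s ρ hp hs hρ0 hρ1 hA
  rw [tylerIter, Matrix.trace_smul, smul_eq_mul]
  field_simp

lemma Qf_tylerIter (A : Matrix (Fin p) (Fin p) ℝ) (x : Fin p → ℝ) :
    Qf x (tylerIter s ρ A) = ((p : ℝ) / (tylerMap s ρ A).trace) * Qf x (tylerMap s ρ A) := by
  rw [tylerIter, Qf_smul]

lemma good_step (hp : 0 < p) (hs : ∀ i, s i ⬝ᵥ s i = 1)
    (hρ0 : 0 < ρ) (hρ1 : ρ < 1) {A : Matrix (Fin p) (Fin p) ℝ} (hA : A.PosDef) :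
    Good (tylerIter s ρ A) := by
  have ht := trace_tylerMap_pos s ρ hp hs hρ0 hρ1 hA
  have hpR : (0:ℝ) < p := Nat.cast_pos.mpr hp
  have hcoef : 0 < (p : ℝ) / (tylerMap s ρ A).trace := by positivity
  have hTpd := tylerMap_posDef s ρ hρ0 hρ1 hA
  refine ⟨Matrix.PosDef.of_dotProduct_mulVec_pos ?_ ?_, trace_tylerIter s ρ hp hs hρ0 hρ1 hA, ?_⟩
  · -- hermitian
    rw [Matrix.IsHermitian, tylerIter, Matrix.conjTranspose_smul]
    rw [hTpd.isHermitian, star_trivial]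
  · intro x hx
    have h := Qf_pos hTpd hx
    have : 0 < Qf x (tylerIter s ρ A) := by
      rw [Qf_tylerIter]; positivity
    simpa [Qf] using this
  · refine ⟨((p : ℝ) / (tylerMap s ρ A).trace) * ρ, by positivity, fun x => ?_⟩
    rw [Qf_tylerIter]
    have := Qf_tylerMap_lower s ρ hρ0 hρ1 hA x
    calc ((p : ℝ) / (tylerMap s ρ A).trace) * ρ * (x ⬝ᵥ x)
        = ((p : ℝ) / (tylerMap s ρ A).trace) * (ρ * (x ⬝ᵥ x)) := by ring
      _ ≤ ((p : ℝ) / (tylerMap s ρ A).trace) * Qf x (tylerMap s ρ A) :=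
          mul_le_mul_of_nonneg_left this hcoef.le

/-- Uniform lower bound after one step from a `Good` matrix. -/
lemma good_lb_unif (hp : 0 < p) (hn : 0 < n) (hs : ∀ i, s i ⬝ᵥ s i = 1)
    (hρ0 : 0 < ρ) (hρ1 : ρ < 1) {A : Matrix (Fin p) (Fin p) ℝ} (GA : Good A) (x : Fin p → ℝ) :
    ρ / ((1 - ρ) * p + ρ) * (x ⬝ᵥ x) ≤ Qf x (tylerIter s ρ A) := by
  have hpR : (0:ℝ) < p := Nat.cast_pos.mpr hp
  have hnR : (0:ℝ) < n := Nat.cast_pos.mpr hn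
  have h1ρ : (0:ℝ) < 1 - ρ := by linarith
  have ht := trace_tylerMap_pos s ρ hp hs hρ0 hρ1 GA.pd
  have htub : (tylerMap s ρ A).trace ≤ ((1 - ρ) * p + ρ) * p := by
    rw [trace_tylerMap s ρ hs]
    have hterm : ∀ i : Fin n, 1 / dd s A i ≤ (p : ℝ) := fun i => w_le s GA.pd GA.tr (hs i)
    have hsum : ∑ i, 1 / dd s A i ≤ (n : ℝ) * p := by
      calc ∑ i : Fin n, 1 / dd s A i ≤ ∑ _i : Fin n, (p : ℝ) :=
            Finset.sum_le_sum fun i _ => hterm i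
        _ = (n : ℝ) * p := by
            rw [Finset.sum_const, Finset.card_univ, Fintype.card_fin, nsmul_eq_mul]
    have hc : (0:ℝ) < (1 - ρ) * ((p : ℝ) / n) := by positivity
    have := mul_le_mul_of_nonneg_left hsum hc.le
    have hn0 : (n : ℝ) ≠ 0 := hnR.ne'
    have heq : (1 - ρ) * ((p : ℝ) / n) * ((n : ℝ) * p) = (1 - ρ) * p * p := by
      field_simp
    nlinarith [this, heq]
  have hden : (0:ℝ) < (1 - ρ) * p + ρ := by positivity
  rw [Qf_tylerIter]
  have hlow := Qf_tylerMap_lower s ρ hρ0 hρ1 GA.pd x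
  have hcoef : ρ / ((1 - ρ) * p + ρ) ≤ (p : ℝ) / (tylerMap s ρ A).trace * ρ := by
    rw [div_le_iff₀ hden]
    rw [div_mul_eq_mul_div, div_mul_eq_mul_div, le_div_iff₀ ht]
    nlinarith [htub, hρ0]
  have hx2 := dot_self_nonneg x
  calc ρ / ((1 - ρ) * p + ρ) * (x ⬝ᵥ x)
      ≤ ((p : ℝ) / (tylerMap s ρ A).trace * ρ) * (x ⬝ᵥ x) :=
        mul_le_mul_of_nonneg_right hcoef hx2
    _ = ((p : ℝ) / (tylerMap s ρ A).trace) * (ρ * (x ⬝ᵥ x)) := by ring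
    _ ≤ ((p : ℝ) / (tylerMap s ρ A).trace) * Qf x (tylerMap s ρ A) := by
        have hcoef2 : (0:ℝ) ≤ (p : ℝ) / (tylerMap s ρ A).trace := by positivity
        exact mul_le_mul_of_nonneg_left hlow hcoef2

/-! ### Contraction -/

noncomputable def uu (A B : Matrix (Fin p) (Fin p) ℝ) : ℝ := MM A B * MM B A - 1

lemma SS_nonempty_of_good (hp : 0 < p) {A B : Matrix (Fin p) (Fin p) ℝ}
    (GA : Good A) (GB : Good B) : (SS A B).Nonempty := by
  obtain ⟨ε, hε, hlb⟩ := GB.lb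
  have hpR : (0:ℝ) < p := Nat.cast_pos.mpr hp
  refine ⟨(p : ℝ) / ε, fun x => ?_⟩
  have h1 : Qf x A ≤ p * (x ⬝ᵥ x) := by
    have h := Qf_le_trace GA.pd.posSemidef x
    rwa [GA.tr] at h
  have h2 : ε * (x ⬝ᵥ x) ≤ Qf x B := hlb x
  calc Qf x A ≤ (p : ℝ) * (x ⬝ᵥ x) := h1
    _ = ((p : ℝ) / ε) * (ε * (x ⬝ᵥ x)) := by field_simp
    _ ≤ ((p : ℝ) / ε) * Qf x B := mul_le_mul_of_nonneg_left h2 (by positivity)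

lemma uu_nonneg (hp : 0 < p) {A B : Matrix (Fin p) (Fin p) ℝ}
    (GA : Good A) (GB : Good B) : 0 ≤ uu A B := by
  have h1 := MM_one_le hp GA.tr GB.tr (SS_nonempty_of_good hp GA GB)
  have h2 := MM_one_le hp GB.tr GA.tr (SS_nonempty_of_good hp GB GA)
  have : 1 ≤ MM A B * MM B A := by nlinarith [h1, h2]
  unfold uu; linarith

set_option maxHeartbeats 1200000 in
lemma contract (hp : 0 < p) (hn : 0 < n) (hs : ∀ i, s i ⬝ᵥ s i = 1)
    (hρ0 : 0 < ρ) (hρ1 : ρ < 1) {A B : Matrix (Fin p) (Fin p) ℝ}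
    (GA : Good A) (GB : Good B) :
    uu (tylerIter s ρ A) (tylerIter s ρ B) ≤
      ((1 - ρ) * (p:ℝ)^2 / ((1 - ρ) * (p:ℝ)^2 + ρ)) * uu A B := by
  have hpR : (0:ℝ) < p := Nat.cast_pos.mpr hp
  have hnR : (0:ℝ) < n := Nat.cast_pos.mpr hn
  have h1ρ : (0:ℝ) < 1 - ρ := by linarith
  set q : ℝ := (1 - ρ) * (p:ℝ)^2 with hqdef
  have hq0 : 0 < q := by positivity
  have hqρ : 0 < q + ρ := by linarith
  -- sandwich constants
  have hneAB : (SS A B).Nonempty := SS_nonempty_of_good hp GA GB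
  have hneBA : (SS B A).Nonempty := SS_nonempty_of_good hp GB GA
  set M : ℝ := MM A B with hMdef
  set M' : ℝ := MM B A with hM'def
  have hM1 : 1 ≤ M := MM_one_le hp GA.tr GB.tr hneAB
  have hM'1 : 1 ≤ M' := MM_one_le hp GB.tr GA.tr hneBA
  have hM0 : 0 < M := by linarith
  have hM'0 : 0 < M' := by linarith
  have hAB : ∀ x, Qf x A ≤ M * Qf x B :=
    MM_spec hneAB (fun x => Qf_nonneg GB.pd.posSemidef x)
  have hBA : ∀ x, Qf x B ≤ M' * Qf x A :=
    MM_spec hneBA (fun x => Qf_nonneg GA.pd.posSemidef x)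
  -- weights comparison
  have hdA : ∀ i, 0 < dd s A i := fun i => dd_pos s GA.pd (hs i)
  have hdB : ∀ i, 0 < dd s B i := fun i => dd_pos s GB.pd (hs i)
  have hinvAB := inv_anti GA.pd GB.pd hM0 hAB
  have hinvBA := inv_anti GB.pd GA.pd hM'0 hBA
  have hdBA : ∀ i, dd s B i ≤ M * dd s A i := fun i => hinvAB (s i)
  have hdAB : ∀ i, dd s A i ≤ M' * dd s B i := fun i => hinvBA (s i)
  have hwAB : ∀ i, 1 / dd s A i ≤ M * (1 / dd s B i) := by
    intro i
    rw [show M * (1 / dd s B i) = M / dd s B i by ring, div_le_div_iff₀ (hdA i) (hdB i)]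
    nlinarith [hdBA i]
  have hwBA : ∀ i, 1 / dd s B i ≤ M' * (1 / dd s A i) := by
    intro i
    rw [show M' * (1 / dd s A i) = M' / dd s A i by ring, div_le_div_iff₀ (hdB i) (hdA i)]
    nlinarith [hdAB i]
  have hwB_le : ∀ i, 1 / dd s B i ≤ (p : ℝ) := fun i => w_le s GB.pd GB.tr (hs i)
  set c : ℝ := (1 - ρ) * ((p : ℝ) / n) with hcdef
  have hc0 : 0 < c := by positivity
  set PA : (Fin p → ℝ) → ℝ := fun x => c * ∑ i, (1 / dd s A i) * (s i ⬝ᵥ x) ^ 2 with hPA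
  set PB : (Fin p → ℝ) → ℝ := fun x => c * ∑ i, (1 / dd s B i) * (s i ⬝ᵥ x) ^ 2 with hPB
  have hQTA : ∀ x, Qf x (tylerMap s ρ A) = PA x + ρ * (x ⬝ᵥ x) := fun x => Qf_tylerMap s ρ A x
  have hQTB : ∀ x, Qf x (tylerMap s ρ B) = PB x + ρ * (x ⬝ᵥ x) := fun x => Qf_tylerMap s ρ B x
  have hPAB : ∀ x, PA x ≤ M * PB x := by
    intro x
    have h1 : ∑ i, (1 / dd s A i) * (s i ⬝ᵥ x) ^ 2
        ≤ ∑ i, (M * (1 / dd s B i)) * (s i ⬝ᵥ x) ^ 2 :=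
      Finset.sum_le_sum fun i _ => mul_le_mul_of_nonneg_right (hwAB i) (sq_nonneg _)
    calc PA x ≤ c * ∑ i, (M * (1 / dd s B i)) * (s i ⬝ᵥ x) ^ 2 :=
          mul_le_mul_of_nonneg_left h1 hc0.le
      _ = M * PB x := by
          rw [hPB]; simp only []
          rw [Finset.mul_sum, Finset.mul_sum, Finset.mul_sum]
          refine Finset.sum_congr rfl fun i _ => by ring
  have hPBA : ∀ x, PB x ≤ M' * PA x := by
    intro x
    have h1 : ∑ i, (1 / dd s B i) * (s i ⬝ᵥ x) ^ 2
        ≤ ∑ i, (M' * (1 / dd s A i)) * (s i ⬝ᵥ x) ^ 2 :=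
      Finset.sum_le_sum fun i _ => mul_le_mul_of_nonneg_right (hwBA i) (sq_nonneg _)
    calc PB x ≤ c * ∑ i, (M' * (1 / dd s A i)) * (s i ⬝ᵥ x) ^ 2 :=
          mul_le_mul_of_nonneg_left h1 hc0.le
      _ = M' * PA x := by
          rw [hPA]; simp only []
          rw [Finset.mul_sum, Finset.mul_sum, Finset.mul_sum]
          refine Finset.sum_congr rfl fun i _ => by ring
  have hsq : ∀ (i : Fin n) (x : Fin p → ℝ), (s i ⬝ᵥ x) ^ 2 ≤ x ⬝ᵥ x := by
    intro i x
    have h := cs_psd (A := (1 : Matrix (Fin p) (Fin p) ℝ)) Matrix.transpose_one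
      (fun y => by simpa using dot_self_nonneg y) (s i) x
    simpa [Matrix.one_mulVec, hs i] using h
  have hPBq : ∀ x, PB x ≤ q * (x ⬝ᵥ x) := by
    intro x
    have h1 : ∀ i : Fin n, (1 / dd s B i) * (s i ⬝ᵥ x) ^ 2 ≤ (p : ℝ) * (x ⬝ᵥ x) := by
      intro i
      have := mul_le_mul (hwB_le i) (hsq i x) (sq_nonneg _) hpR.le
      exact this
    have h2 : ∑ i, (1 / dd s B i) * (s i ⬝ᵥ x) ^ 2 ≤ (n : ℝ) * ((p : ℝ) * (x ⬝ᵥ x)) := by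
      calc ∑ i, (1 / dd s B i) * (s i ⬝ᵥ x) ^ 2 ≤ ∑ _i : Fin n, (p : ℝ) * (x ⬝ᵥ x) :=
            Finset.sum_le_sum fun i _ => h1 i
        _ = (n : ℝ) * ((p : ℝ) * (x ⬝ᵥ x)) := by
            rw [Finset.sum_const, Finset.card_univ, Fintype.card_fin, nsmul_eq_mul]
    have h3 : c * ((n : ℝ) * ((p : ℝ) * (x ⬝ᵥ x))) = q * (x ⬝ᵥ x) := by
      rw [hcdef, hqdef]
      field_simp
    calc PB x ≤ c * ((n : ℝ) * ((p : ℝ) * (x ⬝ᵥ x))) := mul_le_mul_of_nonneg_left h2 hc0.le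
      _ = q * (x ⬝ᵥ x) := h3
  have hPB0 : ∀ x, 0 ≤ PB x := by
    intro x
    refine mul_nonneg hc0.le (Finset.sum_nonneg fun i _ => ?_)
    exact mul_nonneg (one_div_nonneg.mpr (hdB i).le) (sq_nonneg _)
  set m : ℝ := 1 / M' with hmdef
  have hm0 : 0 < m := by positivity
  have hm1 : m ≤ 1 := by rw [hmdef, div_le_one hM'0]; linarith
  have hmM' : m * M' = 1 := by rw [hmdef]; field_simp
  have hPlow : ∀ x, m * PB x ≤ PA x := by
    intro x
    have := mul_le_mul_of_nonneg_left (hPBA x) hm0.le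
    calc m * PB x ≤ m * (M' * PA x) := this
      _ = PA x := by rw [← mul_assoc, hmM', one_mul]
  set β : ℝ := (M * q + ρ) / (q + ρ) with hβdef
  set α : ℝ := (m * q + ρ) / (q + ρ) with hαdef
  have hα0 : 0 < α := by positivity
  have hβ0 : 0 < β := by positivity
  have hβq : β * (q + ρ) = M * q + ρ := by rw [hβdef]; field_simp
  have hαq : α * (q + ρ) = m * q + ρ := by rw [hαdef]; field_simp
  have hβM : β ≤ M := by rw [hβdef, div_le_iff₀ hqρ]; nlinarith
  have hαm : m ≤ α := by rw [hαdef, le_div_iff₀ hqρ]; nlinarith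
  have hup : ∀ x, Qf x (tylerMap s ρ A) ≤ β * Qf x (tylerMap s ρ B) := by
    intro x
    rw [hQTA, hQTB]
    have key := mul_nonneg (sub_nonneg.mpr hβM) (sub_nonneg.mpr (hPBq x))
    nlinarith [key, hPAB x, hβq, dot_self_nonneg x, hPB0 x]
  have hlow : ∀ x, α * Qf x (tylerMap s ρ B) ≤ Qf x (tylerMap s ρ A) := by
    intro x
    rw [hQTA, hQTB]
    have key := mul_nonneg (sub_nonneg.mpr hαm) (sub_nonneg.mpr (hPBq x))
    nlinarith [key, hPlow x, hαq, dot_self_nonneg x, hPB0 x]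
  -- normalization
  have htA0 : 0 < (tylerMap s ρ A).trace := trace_tylerMap_pos s ρ hp hs hρ0 hρ1 GA.pd
  have htB0 : 0 < (tylerMap s ρ B).trace := trace_tylerMap_pos s ρ hp hs hρ0 hρ1 GB.pd
  set cA : ℝ := (p : ℝ) / (tylerMap s ρ A).trace with hcA
  set cB : ℝ := (p : ℝ) / (tylerMap s ρ B).trace with hcB
  have hcA0 : 0 < cA := by positivity
  have hcB0 : 0 < cB := by positivity
  set γ : ℝ := cA / cB with hγdef
  have hγ0 : 0 < γ := by positivity
  have hHA : ∀ x, Qf x (tylerIter s ρ A) = cA * Qf x (tylerMap s ρ A) :=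
    fun x => Qf_tylerIter s ρ A x
  have hHB : ∀ x, Qf x (tylerIter s ρ B) = cB * Qf x (tylerMap s ρ B) :=
    fun x => Qf_tylerIter s ρ B x
  have hz1 : β * γ ∈ SS (tylerIter s ρ A) (tylerIter s ρ B) := by
    intro x
    rw [hHA, hHB]
    have h1 := mul_le_mul_of_nonneg_left (hup x) hcA0.le
    have h2 : β * γ * (cB * Qf x (tylerMap s ρ B)) = cA * (β * Qf x (tylerMap s ρ B)) := by
      rw [hγdef]; field_simp
    rw [h2]; exact h1
  have hz2 : (α * γ)⁻¹ ∈ SS (tylerIter s ρ B) (tylerIter s ρ A) := by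
    intro x
    rw [hHA, hHB]
    have h1 := mul_le_mul_of_nonneg_left (hlow x) hcB0.le
    have h2 : (α * γ)⁻¹ * (cA * Qf x (tylerMap s ρ A))
        = cB * (α⁻¹ * Qf x (tylerMap s ρ A)) := by
      rw [hγdef]; field_simp
    rw [h2]
    have h3 : Qf x (tylerMap s ρ B) ≤ α⁻¹ * Qf x (tylerMap s ρ A) := by
      rw [le_inv_mul_iff₀ hα0]; linarith [hlow x]
    exact mul_le_mul_of_nonneg_left h3 hcB0.le
  have GHA : Good (tylerIter s ρ A) := good_step s ρ hp hs hρ0 hρ1 GA.pd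
  have GHB : Good (tylerIter s ρ B) := good_step s ρ hp hs hρ0 hρ1 GB.pd
  have h1 : MM (tylerIter s ρ A) (tylerIter s ρ B) ≤ β * γ :=
    MM_le hp GHA.tr GHB.tr hz1
  have h2 : MM (tylerIter s ρ B) (tylerIter s ρ A) ≤ (α * γ)⁻¹ :=
    MM_le hp GHB.tr GHA.tr hz2
  have h1' : 1 ≤ MM (tylerIter s ρ A) (tylerIter s ρ B) :=
    MM_one_le hp GHA.tr GHB.tr ⟨_, hz1⟩
  have h2' : 1 ≤ MM (tylerIter s ρ B) (tylerIter s ρ A) :=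
    MM_one_le hp GHB.tr GHA.tr ⟨_, hz2⟩
  have hprod : MM (tylerIter s ρ A) (tylerIter s ρ B) * MM (tylerIter s ρ B) (tylerIter s ρ A)
      ≤ (β * γ) * (α * γ)⁻¹ :=
    mul_le_mul h1 h2 (by linarith) (by positivity)
  have hsimp : (β * γ) * (α * γ)⁻¹ = β / α := by
    field_simp
  -- final scalar inequality : β/α - 1 ≤ θ (M M' - 1)
  have hmq : 0 < m * q + ρ := by positivity
  have hden2 : 0 < q + ρ * M' := by nlinarith
  have hβα : β / α = (M * q + ρ) * M' / (q + ρ * M') := by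
    rw [hβdef, hαdef, div_div_div_cancel_right₀ hqρ.ne']
    rw [div_eq_div_iff hmq.ne' hden2.ne', hmdef]
    field_simp
  have hMM'1 : 1 ≤ M * M' := by nlinarith
  have hfinal : β / α - 1 ≤ (q / (q + ρ)) * (M * M' - 1) := by
    rw [hβα, ← sub_nonneg]
    have hkey : 0 ≤ ρ * q * (M' - 1) * (M * M' - 1) := by
      apply mul_nonneg (mul_nonneg (mul_nonneg hρ0.le hq0.le) (by linarith)) (by linarith)
    have hexp : q / (q + ρ) * (M * M' - 1) - ((M * q + ρ) * M' / (q + ρ * M') - 1) =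
        ρ * q * (M' - 1) * (M * M' - 1) / ((q + ρ) * (q + ρ * M')) := by
      field_simp
      ring
    rw [hexp]
    positivity
  -- put it together
  unfold uu
  have hθ : (1 - ρ) * (p:ℝ)^2 / ((1 - ρ) * (p:ℝ)^2 + ρ) = q / (q + ρ) := by rw [hqdef]
  rw [hθ]
  calc MM (tylerIter s ρ A) (tylerIter s ρ B) * MM (tylerIter s ρ B) (tylerIter s ρ A) - 1
      ≤ (β * γ) * (α * γ)⁻¹ - 1 := by linarith [hprod]
    _ = β / α - 1 := by rw [hsimp]
    _ ≤ (q / (q + ρ)) * (M * M' - 1) := hfinal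
    _ = q / (q + ρ) * (MM A B * MM B A - 1) := by rw [hMdef, hM'def]


/-- Entrywise distance controlled by the sandwich gap `uu`. -/
lemma entry_bound (hp : 0 < p) {A B : Matrix (Fin p) (Fin p) ℝ}
    (GA : Good A) (GB : Good B) (i j : Fin p) :
    |A i j - B i j| ≤ 2 * p * uu A B := by
  have hpR : (0:ℝ) < p := Nat.cast_pos.mpr hp
  have hneAB := SS_nonempty_of_good hp GA GB
  have hneBA := SS_nonempty_of_good hp GB GA
  have hM1 : 1 ≤ MM A B := MM_one_le hp GA.tr GB.tr hneAB
  have hM'1 : 1 ≤ MM B A := MM_one_le hp GB.tr GA.tr hneBA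
  have hAB := MM_spec hneAB (fun x => Qf_nonneg GB.pd.posSemidef x)
  have hBA := MM_spec hneBA (fun x => Qf_nonneg GA.pd.posSemidef x)
  set K : ℝ := MM A B * MM B A - 1 with hK
  have hK0 : 0 ≤ K := by nlinarith
  have hQd : ∀ x, |Qf x A - Qf x B| ≤ K * ((p:ℝ) * (x ⬝ᵥ x)) := by
    intro x
    have hxA : Qf x A ≤ p * (x ⬝ᵥ x) := by
      have h := Qf_le_trace GA.pd.posSemidef x; rwa [GA.tr] at h
    have hxB : Qf x B ≤ p * (x ⬝ᵥ x) := by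
      have h := Qf_le_trace GB.pd.posSemidef x; rwa [GB.tr] at h
    have hA0 : 0 ≤ Qf x A := Qf_nonneg GA.pd.posSemidef x
    have hB0 : 0 ≤ Qf x B := Qf_nonneg GB.pd.posSemidef x
    have he0 : 0 ≤ (x ⬝ᵥ x) := dot_self_nonneg x
    rw [abs_le]
    constructor
    · have h1 := hBA x
      have h3 : MM B A - 1 ≤ K := by nlinarith
      nlinarith [mul_le_mul_of_nonneg_right h3 (mul_nonneg hpR.le he0),
        mul_le_mul_of_nonneg_left hxA (show (0:ℝ) ≤ MM B A - 1 by linarith)]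
    · have h1 := hAB x
      have h3 : MM A B - 1 ≤ K := by nlinarith
      nlinarith [mul_le_mul_of_nonneg_right h3 (mul_nonneg hpR.le he0),
        mul_le_mul_of_nonneg_left hxB (show (0:ℝ) ≤ MM A B - 1 by linarith)]
  set u : Fin p → ℝ := Pi.single i 1 with hu
  set v : Fin p → ℝ := Pi.single j 1 with hv
  have hexp : ∀ (C : Matrix (Fin p) (Fin p) ℝ), Cᵀ = C →
      Qf (u + v) C - Qf (u - v) C = 4 * (u ⬝ᵥ C.mulVec v) := by
    intro C hC
    rw [Qf, Qf, Matrix.mulVec_add, Matrix.mulVec_sub, dotProduct_add, dotProduct_sub,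
      add_dotProduct, add_dotProduct, sub_dotProduct, sub_dotProduct, bil_symm hC v u]
    ring
  have huvC : ∀ C : Matrix (Fin p) (Fin p) ℝ, u ⬝ᵥ C.mulVec v = C i j := by
    intro C
    rw [hu, hv]
    simp [Matrix.mulVec_single, single_dotProduct]
  have hsingle : ∀ a b : Fin p,
      0 ≤ (Pi.single a 1 : Fin p → ℝ) ⬝ᵥ Pi.single b 1 ∧
        (Pi.single a 1 : Fin p → ℝ) ⬝ᵥ Pi.single b 1 ≤ 1 := by
    intro a b
    rw [single_dotProduct, one_mul, Pi.single_apply]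
    split_ifs <;> norm_num
  have hee : ∀ (w z : Fin p → ℝ), (w + z) ⬝ᵥ (w + z) = w ⬝ᵥ w + w ⬝ᵥ z + z ⬝ᵥ w + z ⬝ᵥ z := by
    intro w z
    rw [dotProduct_add, add_dotProduct, add_dotProduct]
    ring
  have hes : ∀ (w z : Fin p → ℝ), (w - z) ⬝ᵥ (w - z) = w ⬝ᵥ w - w ⬝ᵥ z - z ⬝ᵥ w + z ⬝ᵥ z := by
    intro w z
    rw [dotProduct_sub, sub_dotProduct, sub_dotProduct]
    ring
  have he1 : (u + v) ⬝ᵥ (u + v) ≤ 4 := by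
    rw [hee, hu, hv]
    obtain ⟨h1, h2⟩ := hsingle i i
    obtain ⟨h3, h4⟩ := hsingle i j
    obtain ⟨h5, h6⟩ := hsingle j i
    obtain ⟨h7, h8⟩ := hsingle j j
    linarith
  have he2 : (u - v) ⬝ᵥ (u - v) ≤ 4 := by
    rw [hes, hu, hv]
    obtain ⟨h1, h2⟩ := hsingle i i
    obtain ⟨h3, h4⟩ := hsingle i j
    obtain ⟨h5, h6⟩ := hsingle j i
    obtain ⟨h7, h8⟩ := hsingle j j
    linarith
  have hAij : A i j - B i j
      = ((Qf (u + v) A - Qf (u + v) B) - ((Qf (u - v) A - Qf (u - v) B))) / 4 := by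
    have e1 := hexp A (posdef_symm GA.pd)
    have e2 := hexp B (posdef_symm GB.pd)
    rw [huvC A] at e1
    rw [huvC B] at e2
    linarith
  have hb1 := hQd (u + v)
  have hb2 := hQd (u - v)
  have hKp : 0 ≤ K * (p:ℝ) := mul_nonneg hK0 hpR.le
  have hb1' : |Qf (u + v) A - Qf (u + v) B| ≤ K * ((p:ℝ) * 4) := by
    refine hb1.trans ?_
    have := mul_le_mul_of_nonneg_left he1 hpR.le
    nlinarith
  have hb2' : |Qf (u - v) A - Qf (u - v) B| ≤ K * ((p:ℝ) * 4) := by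
    refine hb2.trans ?_
    have := mul_le_mul_of_nonneg_left he2 hpR.le
    nlinarith
  rw [hAij]
  have habs := abs_sub (Qf (u + v) A - Qf (u + v) B) (Qf (u - v) A - Qf (u - v) B)
  rw [abs_div]
  have h4 : |(4:ℝ)| = 4 := by norm_num
  rw [h4]
  rw [div_le_iff₀ (by norm_num : (0:ℝ) < 4)]
  unfold uu
  rw [← hK]
  nlinarith [hb1', hb2', habs]

end Tyler

end TylerAux

open TylerAux in
/-- **Theorem 1.** For `0 < ρ < 1`, the normalized regularized Tyler iteration converges to a
unique positive definite limit of trace `p`, independently of the positive definite initial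
matrix. -/
theorem tyler_iteration_converges {p n : ℕ} (hp : 0 < p) (hn : 0 < n)
    (s : Fin n → Fin p → ℝ) (hs : ∀ i, s i ⬝ᵥ s i = 1)
    (ρ : ℝ) (hρ0 : 0 < ρ) (hρ1 : ρ < 1) :
    ∃! L : Matrix (Fin p) (Fin p) ℝ, L.PosDef ∧ L.trace = (p : ℝ) ∧
      ∀ A₀ : Matrix (Fin p) (Fin p) ℝ, A₀.PosDef →
        Tendsto (fun k => (tylerIter s ρ)^[k] A₀) atTop (𝓝 L) := by
  classical
  have hpR : (0:ℝ) < p := Nat.cast_pos.mpr hp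
  have h1ρ : (0:ℝ) < 1 - ρ := by linarith
  set θ : ℝ := (1 - ρ) * (p:ℝ)^2 / ((1 - ρ) * (p:ℝ)^2 + ρ) with hθdef
  have hq0 : 0 < (1 - ρ) * (p:ℝ)^2 := by positivity
  have hθ0 : 0 ≤ θ := by positivity
  have hθ1 : θ < 1 := by rw [hθdef, div_lt_one (by linarith)]; linarith
  have hgood : ∀ {A : Matrix (Fin p) (Fin p) ℝ}, A.PosDef → Good (tylerIter s ρ A) :=
    fun hA => good_step s ρ hp hs hρ0 hρ1 hA
  have chainGood : ∀ (A : Matrix (Fin p) (Fin p) ℝ), A.PosDef →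
      ∀ k : ℕ, Good ((tylerIter s ρ)^[k + 1] A) := by
    intro A hA k
    induction k with
    | zero => simpa using hgood hA
    | succ k ih => rw [Function.iterate_succ_apply']; exact hgood ih.pd
  have decay : ∀ (A B : Matrix (Fin p) (Fin p) ℝ), A.PosDef → B.PosDef → ∀ k : ℕ,
      uu ((tylerIter s ρ)^[k + 1] A) ((tylerIter s ρ)^[k + 1] B)
        ≤ θ ^ k * uu (tylerIter s ρ A) (tylerIter s ρ B) := by
    intro A B hA hB k
    induction k with
    | zero => simp
    | succ k ih =>
      have h1 : (tylerIter s ρ)^[k + 1 + 1] A = tylerIter s ρ ((tylerIter s ρ)^[k + 1] A) :=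
        Function.iterate_succ_apply' _ _ _
      have h2 : (tylerIter s ρ)^[k + 1 + 1] B = tylerIter s ρ ((tylerIter s ρ)^[k + 1] B) :=
        Function.iterate_succ_apply' _ _ _
      rw [h1, h2]
      calc uu (tylerIter s ρ ((tylerIter s ρ)^[k + 1] A))
              (tylerIter s ρ ((tylerIter s ρ)^[k + 1] B))
          ≤ θ * uu ((tylerIter s ρ)^[k + 1] A) ((tylerIter s ρ)^[k + 1] B) :=
            contract s ρ hp hn hs hρ0 hρ1 (chainGood A hA k) (chainGood B hB k)
        _ ≤ θ * (θ ^ k * uu (tylerIter s ρ A) (tylerIter s ρ B)) :=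
            mul_le_mul_of_nonneg_left ih hθ0
        _ = θ ^ (k + 1) * uu (tylerIter s ρ A) (tylerIter s ρ B) := by ring
  -- convergence of each chain
  have conv : ∀ (A : Matrix (Fin p) (Fin p) ℝ), A.PosDef →
      ∃ L : Matrix (Fin p) (Fin p) ℝ,
        Tendsto (fun k => (tylerIter s ρ)^[k] A) atTop (𝓝 L) := by
    intro A hA
    have hA' : (tylerIter s ρ A).PosDef := (hgood hA).pd
    have hdist : ∀ k, ∀ i j : Fin p,
        dist (((tylerIter s ρ)^[k + 1] A) i j) (((tylerIter s ρ)^[k + 1 + 1] A) i j)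
          ≤ (2 * p * uu (tylerIter s ρ (tylerIter s ρ A)) (tylerIter s ρ A)) * θ ^ k := by
      intro k i j
      have hre : (tylerIter s ρ)^[k + 1] (tylerIter s ρ A) = (tylerIter s ρ)^[k + 1 + 1] A :=
        (Function.iterate_succ_apply (tylerIter s ρ) (k + 1) A).symm
      have hd := decay (tylerIter s ρ A) A hA' hA k
      rw [hre] at hd
      have hGk2 : Good ((tylerIter s ρ)^[k + 1 + 1] A) := by
        rw [← hre]; exact chainGood (tylerIter s ρ A) hA' k
      have he := entry_bound hp hGk2 (chainGood A hA k) i j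
      calc dist (((tylerIter s ρ)^[k + 1] A) i j) (((tylerIter s ρ)^[k + 1 + 1] A) i j)
          = |((tylerIter s ρ)^[k + 1 + 1] A) i j - ((tylerIter s ρ)^[k + 1] A) i j| := by
            rw [Real.dist_eq, abs_sub_comm]
        _ ≤ 2 * p * uu ((tylerIter s ρ)^[k + 1 + 1] A) ((tylerIter s ρ)^[k + 1] A) := he
        _ ≤ 2 * p * (θ ^ k * uu (tylerIter s ρ (tylerIter s ρ A)) (tylerIter s ρ A)) :=
            mul_le_mul_of_nonneg_left hd (by positivity)
        _ = (2 * p * uu (tylerIter s ρ (tylerIter s ρ A)) (tylerIter s ρ A)) * θ ^ k := by ring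
    have hcauchy : ∀ i j : Fin p, ∃ l : ℝ,
        Tendsto (fun k => ((tylerIter s ρ)^[k + 1] A) i j) atTop (𝓝 l) := by
      intro i j
      exact cauchySeq_tendsto_of_complete
        (cauchySeq_of_le_geometric θ _ hθ1 (fun k => hdist k i j))
    choose L hL using hcauchy
    refine ⟨Matrix.of L, ?_⟩
    have hgL : Tendsto (fun k => (tylerIter s ρ)^[k + 1] A) atTop (𝓝 (Matrix.of L)) :=
      tendsto_pi_nhds.mpr fun i => tendsto_pi_nhds.mpr fun j => hL i j
    exact (tendsto_add_atTop_iff_nat 1).mp hgL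
  have entrytend : ∀ {f : ℕ → Matrix (Fin p) (Fin p) ℝ} {L' : Matrix (Fin p) (Fin p) ℝ},
      Tendsto f atTop (𝓝 L') → ∀ i j : Fin p,
        Tendsto (fun k => f k i j) atTop (𝓝 (L' i j)) := by
    intro f L' hf i j
    exact tendsto_pi_nhds.mp (tendsto_pi_nhds.mp hf i) j
  obtain ⟨L, hLt⟩ := conv 1 Matrix.PosDef.one
  -- all chains share the same limit
  have same : ∀ (A : Matrix (Fin p) (Fin p) ℝ), A.PosDef →
      ∀ L' : Matrix (Fin p) (Fin p) ℝ,
      Tendsto (fun k => (tylerIter s ρ)^[k] A) atTop (𝓝 L') → L' = L := by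
    intro A hA L' hA'
    ext i j
    have h1 := (entrytend hA' i j).comp (tendsto_add_atTop_nat 1)
    have h2 := (entrytend hLt i j).comp (tendsto_add_atTop_nat 1)
    have hdiff : Tendsto
        (fun k => ((tylerIter s ρ)^[k + 1] A) i j
          - ((tylerIter s ρ)^[k + 1] (1 : Matrix (Fin p) (Fin p) ℝ)) i j)
        atTop (𝓝 (L' i j - L i j)) := h1.sub h2
    have hb : ∀ k, |((tylerIter s ρ)^[k + 1] A) i j
        - ((tylerIter s ρ)^[k + 1] (1 : Matrix (Fin p) (Fin p) ℝ)) i j|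
        ≤ (2 * p * uu (tylerIter s ρ A) (tylerIter s ρ (1 : Matrix (Fin p) (Fin p) ℝ))) * θ ^ k := by
      intro k
      have he := entry_bound hp (chainGood A hA k) (chainGood 1 Matrix.PosDef.one k) i j
      have hd := decay A 1 hA Matrix.PosDef.one k
      calc |((tylerIter s ρ)^[k + 1] A) i j
          - ((tylerIter s ρ)^[k + 1] (1 : Matrix (Fin p) (Fin p) ℝ)) i j|
          ≤ 2 * p * uu ((tylerIter s ρ)^[k + 1] A)
              ((tylerIter s ρ)^[k + 1] (1 : Matrix (Fin p) (Fin p) ℝ)) := he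
        _ ≤ 2 * p * (θ ^ k * uu (tylerIter s ρ A)
              (tylerIter s ρ (1 : Matrix (Fin p) (Fin p) ℝ))) :=
            mul_le_mul_of_nonneg_left hd (by positivity)
        _ = (2 * p * uu (tylerIter s ρ A)
              (tylerIter s ρ (1 : Matrix (Fin p) (Fin p) ℝ))) * θ ^ k := by ring
    have h0 : Tendsto (fun k : ℕ =>
        (2 * p * uu (tylerIter s ρ A) (tylerIter s ρ (1 : Matrix (Fin p) (Fin p) ℝ))) * θ ^ k)
        atTop (𝓝 0) := by
      have := (tendsto_pow_atTop_nhds_zero_of_lt_one hθ0 hθ1).const_mul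
        (2 * p * uu (tylerIter s ρ A) (tylerIter s ρ (1 : Matrix (Fin p) (Fin p) ℝ)))
      simpa using this
    have hz : Tendsto
        (fun k => ((tylerIter s ρ)^[k + 1] A) i j
          - ((tylerIter s ρ)^[k + 1] (1 : Matrix (Fin p) (Fin p) ℝ)) i j)
        atTop (𝓝 0) := squeeze_zero_norm (fun k => hb k) h0
    have := tendsto_nhds_unique hdiff hz
    linarith [this]
  have hGood1 : Good (1 : Matrix (Fin p) (Fin p) ℝ) := by
    refine ⟨Matrix.PosDef.one, ?_, ⟨1, one_pos, fun x => ?_⟩⟩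
    · simp [Matrix.trace_one]
    · rw [Qf_one, one_mul]
  have hGk0 : ∀ k, Good ((tylerIter s ρ)^[k] (1 : Matrix (Fin p) (Fin p) ℝ)) := by
    intro k
    cases k with
    | zero => simpa using hGood1
    | succ k => exact chainGood 1 Matrix.PosDef.one k
  have hGk1 : ∀ k, Good ((tylerIter s ρ)^[k + 1] (1 : Matrix (Fin p) (Fin p) ℝ)) :=
    chainGood 1 Matrix.PosDef.one
  have hshift : ∀ i j : Fin p,
      Tendsto (fun k => ((tylerIter s ρ)^[k + 1] (1 : Matrix (Fin p) (Fin p) ℝ)) i j)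
        atTop (𝓝 (L i j)) :=
    fun i j => (entrytend hLt i j).comp (tendsto_add_atTop_nat 1)
  -- trace of the limit
  have htrace : L.trace = (p : ℝ) := by
    have h1 : Tendsto
        (fun k => ∑ i, ((tylerIter s ρ)^[k + 1] (1 : Matrix (Fin p) (Fin p) ℝ)) i i)
        atTop (𝓝 (∑ i, L i i)) :=
      tendsto_finset_sum _ (fun i _ => hshift i i)
    have h2 : ∀ k : ℕ, ∑ i, ((tylerIter s ρ)^[k + 1] (1 : Matrix (Fin p) (Fin p) ℝ)) i i
        = (p : ℝ) := by
      intro k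
      have := (hGk1 k).tr
      simpa [Matrix.trace, Matrix.diag] using this
    have h3 : Tendsto (fun _ : ℕ => (p : ℝ)) atTop (𝓝 (∑ i, L i i)) := by
      have heq : (fun k : ℕ =>
          ∑ i, ((tylerIter s ρ)^[k + 1] (1 : Matrix (Fin p) (Fin p) ℝ)) i i)
          = fun _ : ℕ => (p : ℝ) := funext h2
      rwa [heq] at h1
    have h4 : (∑ i, L i i) = (p : ℝ) := tendsto_nhds_unique h3 tendsto_const_nhds
    simpa [Matrix.trace, Matrix.diag] using h4
  -- quadratic form of the limit
  have hQtend : ∀ x : Fin p → ℝ,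
      Tendsto (fun k => Qf x ((tylerIter s ρ)^[k + 1] (1 : Matrix (Fin p) (Fin p) ℝ)))
        atTop (𝓝 (Qf x L)) := by
    intro x
    have hform : ∀ (M : Matrix (Fin p) (Fin p) ℝ), Qf x M = ∑ i, x i * ∑ j, M i j * x j := by
      intro M
      simp [Qf, dotProduct, Matrix.mulVec]
    simp only [hform]
    refine tendsto_finset_sum _ (fun i _ => ?_)
    exact Tendsto.const_mul _ (tendsto_finset_sum _ (fun j _ => (hshift i j).mul_const _))
  -- positive definiteness of the limit
  have hPD : L.PosDef := by
    refine Matrix.PosDef.of_dotProduct_mulVec_pos ?_ ?_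
    · rw [Matrix.IsHermitian]
      ext i j
      rw [Matrix.conjTranspose_apply, star_trivial]
      have hsymk : (fun k => ((tylerIter s ρ)^[k + 1] (1 : Matrix (Fin p) (Fin p) ℝ)) j i)
          = (fun k => ((tylerIter s ρ)^[k + 1] (1 : Matrix (Fin p) (Fin p) ℝ)) i j) := by
        funext k
        have h := (hGk1 k).pd.isHermitian
        have h2 := congrFun (congrFun h i) j
        rw [Matrix.conjTranspose_apply, star_trivial] at h2
        exact h2
      have h1 := hshift j i
      rw [hsymk] at h1
      exact tendsto_nhds_unique h1 (hshift i j)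
    · intro x hx
      have hlb : ∀ k, ρ / ((1 - ρ) * p + ρ) * (x ⬝ᵥ x)
          ≤ Qf x ((tylerIter s ρ)^[k + 1] (1 : Matrix (Fin p) (Fin p) ℝ)) := by
        intro k
        rw [Function.iterate_succ_apply']
        exact good_lb_unif s ρ hp hn hs hρ0 hρ1 (hGk0 k) x
      have hQL : ρ / ((1 - ρ) * p + ρ) * (x ⬝ᵥ x) ≤ Qf x L :=
        ge_of_tendsto' (hQtend x) hlb
      have hxx : 0 < x ⬝ᵥ x := dot_self_pos hx
      have hpos : 0 < ρ / ((1 - ρ) * p + ρ) * (x ⬝ᵥ x) := by positivity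
      have : 0 < Qf x L := lt_of_lt_of_le hpos hQL
      simpa [Qf] using this
  refine ⟨L, ⟨hPD, htrace, fun A₀ hA₀ => ?_⟩, fun L' hL' => ?_⟩
  · obtain ⟨L'', hL''⟩ := conv A₀ hA₀
    rwa [same A₀ hA₀ L'' hL''] at hL''
  · exact same 1 Matrix.PosDef.one L' (hL'.2.2 1 Matrix.PosDef.one)
end

section
/- Let z₁,…,zₙ be i.i.d. uniform on the unit sphere of R^p and D a fixed symmetric p×p matrix, and set C̃ = (p/n) Λ (Σᵢ zᵢ zᵢ^T) Λ^T where Λ Λ^T has the same spectrum as D (i.e., Λ^T Λ = D). Then E[Tr(C̃²)] = (1 - 1/n + 2/(n(1+2/p))) Tr(D²) + Tr(D)²/(n(1+2/p)). -/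
set_option linter.unusedSectionVars false
open Matrix MeasureTheory Finset

variable {p : ℕ} (μ : Measure (Fin p → ℝ)) [IsProbabilityMeasure μ]

theorem mySphere_bound (hsphere : ∀ᵐ z ∂μ, z ⬝ᵥ z = 1) : ∀ᵐ z ∂μ, ∀ a, |z a| ≤ 1 := by
  filter_upwards [hsphere] with z hz a
  have h1 : z a * z a ≤ 1 := by
    have h := Finset.single_le_sum (f := fun b => z b * z b) (fun b _ => mul_self_nonneg (z b))
      (Finset.mem_univ a)
    rw [dotProduct] at hz
    linarith
  rw [abs_le]; constructor <;> nlinarith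

theorem myInt4 (hsphere : ∀ᵐ z ∂μ, z ⬝ᵥ z = 1) (a b c d : Fin p) :
    Integrable (fun z => z a * z b * z c * z d) μ := by
  refine (integrable_const (1:ℝ)).mono' ?_ ?_
  · exact ((((measurable_pi_apply a).mul (measurable_pi_apply b)).mul
      (measurable_pi_apply c)).mul (measurable_pi_apply d)).aestronglyMeasurable
  · filter_upwards [mySphere_bound μ hsphere] with z hz
    have ha := hz a; have hb := hz b; have hc := hz c; have hd := hz d
    have h0 : ∀ x : Fin p, (0:ℝ) ≤ |z x| := fun x => abs_nonneg _
    have h2 : |z a| * |z b| ≤ 1 := by nlinarith [h0 a, h0 b]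
    have h3 : |z c| * |z d| ≤ 1 := by nlinarith [h0 c, h0 d]
    calc ‖z a * z b * z c * z d‖ = |z a| * |z b| * (|z c| * |z d|) := by
          simp [abs_mul]; ring
      _ ≤ 1 := by nlinarith [mul_nonneg (h0 a) (h0 b), mul_nonneg (h0 c) (h0 d)]

theorem myInt2 (hsphere : ∀ᵐ z ∂μ, z ⬝ᵥ z = 1) (a b : Fin p) :
    Integrable (fun z => z a * z b) μ := by
  refine (integrable_const (1:ℝ)).mono' ?_ ?_
  · exact ((measurable_pi_apply a).mul (measurable_pi_apply b)).aestronglyMeasurable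
  · filter_upwards [mySphere_bound μ hsphere] with z hz
    have ha := hz a; have hb := hz b
    calc ‖z a * z b‖ = |z a| * |z b| := by simp [abs_mul]
      _ ≤ 1 := by nlinarith [abs_nonneg (z a), abs_nonneg (z b)]

theorem myMeasurable_mulVec (O : Matrix (Fin p) (Fin p) ℝ) :
    Measurable (fun z : Fin p → ℝ => O.mulVec z) := by
  refine measurable_pi_lambda _ (fun i => ?_)
  simp only [Matrix.mulVec, dotProduct]
  exact Finset.measurable_sum _ (fun j _ => by fun_prop)

theorem myRotInt (hrot : ∀ O ∈ Matrix.orthogonalGroup (Fin p) ℝ, μ.map (fun z => O.mulVec z) = μ)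
    (O : Matrix (Fin p) (Fin p) ℝ) (hO : O ∈ Matrix.orthogonalGroup (Fin p) ℝ)
    (f : (Fin p → ℝ) → ℝ) (hf : Measurable f) :
    ∫ z, f z ∂μ = ∫ z, f (O.mulVec z) ∂μ := by
  conv_lhs => rw [← hrot O hO]
  rw [integral_map (myMeasurable_mulVec O).aemeasurable]
  exact hf.aestronglyMeasurable

noncomputable def myHH {p : ℕ} (v : Fin p → ℝ) : Matrix (Fin p) (Fin p) ℝ :=
  1 - (2:ℝ) • Matrix.vecMulVec v v

theorem myHH_sq {p : ℕ} (v : Fin p → ℝ) (hv : v ⬝ᵥ v = 1) : myHH v * myHH v = 1 := by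
  have hA : Matrix.vecMulVec v v * Matrix.vecMulVec v v = Matrix.vecMulVec v v := by
    ext i j
    simp only [Matrix.mul_apply, Matrix.vecMulVec_apply]
    rw [dotProduct] at hv
    calc ∑ k, v i * v k * (v k * v j) = (v i * v j) * ∑ k, v k * v k := by
          rw [Finset.mul_sum]; exact Finset.sum_congr rfl fun k _ => by ring
      _ = v i * v j := by rw [hv, mul_one]
  simp only [myHH, sub_mul, mul_sub, Matrix.smul_mul, Matrix.mul_smul, one_mul, mul_one,
    smul_smul, hA]
  ext i j
  simp [Matrix.sub_apply, Matrix.smul_apply]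
  ring

theorem myHH_star {p : ℕ} (v : Fin p → ℝ) : star (myHH v) = myHH v := by
  ext i j
  simp [myHH, Matrix.star_apply, Matrix.sub_apply, Matrix.smul_apply, Matrix.one_apply,
    Matrix.vecMulVec_apply, eq_comm]
  ring

theorem myHH_mem {p : ℕ} (v : Fin p → ℝ) (hv : v ⬝ᵥ v = 1) :
    myHH v ∈ Matrix.orthogonalGroup (Fin p) ℝ := by
  have hs := myHH_star v
  rw [Matrix.star_eq_conjTranspose, Matrix.conjTranspose_eq_transpose_of_trivial] at hs
  rw [Matrix.mem_orthogonalGroup_iff, hs, myHH_sq v hv]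

theorem myHH_mulVec {p : ℕ} (v z : Fin p → ℝ) (i : Fin p) :
    (myHH v).mulVec z i = z i - 2 * (v ⬝ᵥ z) * v i := by
  simp only [myHH, Matrix.sub_mulVec, Matrix.smul_mulVec, Matrix.one_mulVec,
    Pi.sub_apply, Pi.smul_apply]
  have : (Matrix.vecMulVec v v).mulVec z i = v i * (v ⬝ᵥ z) := by
    simp only [Matrix.mulVec, dotProduct, Matrix.vecMulVec_apply, Finset.mul_sum]
    exact Finset.sum_congr rfl fun k _ => by ring
  rw [this]; simp; ring

noncomputable def myI4 {p : ℕ} (μ : Measure (Fin p → ℝ)) (a b c d : Fin p) : ℝ :=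
  ∫ z, z a * z b * z c * z d ∂μ

noncomputable def myI2 {p : ℕ} (μ : Measure (Fin p → ℝ)) (a b : Fin p) : ℝ :=
  ∫ z, z a * z b ∂μ

theorem myMeas4 {p : ℕ} (a b c d : Fin p) :
    Measurable (fun z : Fin p → ℝ => z a * z b * z c * z d) :=
  (((measurable_pi_apply a).mul (measurable_pi_apply b)).mul
      (measurable_pi_apply c)).mul (measurable_pi_apply d)

theorem myMeas2 {p : ℕ} (a b : Fin p) :
    Measurable (fun z : Fin p → ℝ => z a * z b) :=
  (measurable_pi_apply a).mul (measurable_pi_apply b)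

theorem mySingle_unit {p : ℕ} (x : Fin p) : (Pi.single x 1 : Fin p → ℝ) ⬝ᵥ Pi.single x 1 = 1 := by
  simp [dotProduct, Pi.single_apply]

theorem myFlip_mulVec {p : ℕ} (x : Fin p) (z : Fin p → ℝ) (y : Fin p) :
    (myHH (Pi.single x 1)).mulVec z y = (if y = x then -1 else 1) * z y := by
  rw [myHH_mulVec]
  rcases eq_or_ne y x with rfl | h
  · simp [dotProduct, Pi.single_apply]; ring
  · simp [dotProduct, Pi.single_apply, h]
variable {p : ℕ} (μ : Measure (Fin p → ℝ)) [IsProbabilityMeasure μ]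

theorem myI4_flip
    (hrot : ∀ O ∈ Matrix.orthogonalGroup (Fin p) ℝ, μ.map (fun z => O.mulVec z) = μ)
    (x a b c d : Fin p) :
    myI4 μ a b c d = ((if a = x then (-1:ℝ) else 1) * (if b = x then -1 else 1) *
      (if c = x then -1 else 1) * (if d = x then -1 else 1)) * myI4 μ a b c d := by
  have h := myRotInt μ hrot _ (myHH_mem _ (mySingle_unit x)) _ (myMeas4 a b c d)
  have hpt : ∀ z : Fin p → ℝ,
      (fun w : Fin p → ℝ => w a * w b * w c * w d) ((myHH (Pi.single x 1)).mulVec z) =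
      ((if a = x then (-1:ℝ) else 1) * (if b = x then -1 else 1) *
        (if c = x then -1 else 1) * (if d = x then -1 else 1)) * (z a * z b * z c * z d) := by
    intro z
    simp only [myFlip_mulVec]
    ring
  show (∫ z : Fin p → ℝ, z a * z b * z c * z d ∂μ) = _
  conv_lhs => rw [h]
  rw [integral_congr_ae (Filter.Eventually.of_forall hpt), integral_const_mul]
  rfl

theorem myI4_odd
    (hrot : ∀ O ∈ Matrix.orthogonalGroup (Fin p) ℝ, μ.map (fun z => O.mulVec z) = μ)
    (x a b c d : Fin p)
    (h : ((if a = x then (-1:ℝ) else 1) * (if b = x then -1 else 1) *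
      (if c = x then -1 else 1) * (if d = x then -1 else 1)) = -1) :
    myI4 μ a b c d = 0 := by
  have := myI4_flip μ hrot x a b c d
  rw [h] at this; linarith

theorem myI2_flip
    (hrot : ∀ O ∈ Matrix.orthogonalGroup (Fin p) ℝ, μ.map (fun z => O.mulVec z) = μ)
    (x a b : Fin p) :
    myI2 μ a b = ((if a = x then (-1:ℝ) else 1) * (if b = x then -1 else 1)) * myI2 μ a b := by
  have h := myRotInt μ hrot _ (myHH_mem _ (mySingle_unit x)) _ (myMeas2 a b)
  have hpt : ∀ z : Fin p → ℝ,
      (fun w : Fin p → ℝ => w a * w b) ((myHH (Pi.single x 1)).mulVec z) =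
      ((if a = x then (-1:ℝ) else 1) * (if b = x then -1 else 1)) * (z a * z b) := by
    intro z
    simp only [myFlip_mulVec]
    ring
  show (∫ z : Fin p → ℝ, z a * z b ∂μ) = _
  conv_lhs => rw [h]
  rw [integral_congr_ae (Filter.Eventually.of_forall hpt), integral_const_mul]
  rfl

theorem myI2_off
    (hrot : ∀ O ∈ Matrix.orthogonalGroup (Fin p) ℝ, μ.map (fun z => O.mulVec z) = μ)
    (a b : Fin p) (hab : a ≠ b) : myI2 μ a b = 0 := by
  have h := myI2_flip μ hrot a a b
  rw [if_pos rfl, if_neg (fun hb => hab hb.symm), mul_one] at h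
  linarith
noncomputable def myV {p : ℕ} (a b : Fin p) : Fin p → ℝ :=
  fun k => if k = a then 3/5 else if k = b then 4/5 else 0

theorem myV_dot {p : ℕ} (a b : Fin p) (hab : a ≠ b) (z : Fin p → ℝ) :
    myV a b ⬝ᵥ z = 3/5 * z a + 4/5 * z b := by
  rw [dotProduct]
  rw [← Finset.sum_subset (Finset.subset_univ {a, b})
    (fun x _ hx => by
      simp only [Finset.mem_insert, Finset.mem_singleton, not_or] at hx
      simp [myV, hx.1, hx.2])]
  rw [Finset.sum_pair hab]
  simp [myV, hab, Ne.symm hab]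

theorem myV_unit {p : ℕ} (a b : Fin p) (hab : a ≠ b) : myV a b ⬝ᵥ myV a b = 1 := by
  rw [myV_dot a b hab]
  simp [myV, hab, Ne.symm hab]
  norm_num

theorem myV_mulVec_a {p : ℕ} (a b : Fin p) (hab : a ≠ b) (z : Fin p → ℝ) :
    (myHH (myV a b)).mulVec z a = 7/25 * z a - 24/25 * z b := by
  rw [myHH_mulVec, myV_dot a b hab]
  simp [myV]
  ring

theorem myV_mulVec_b {p : ℕ} (a b : Fin p) (hab : a ≠ b) (z : Fin p → ℝ) :
    (myHH (myV a b)).mulVec z b = -(24/25) * z a - 7/25 * z b := by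
  rw [myHH_mulVec, myV_dot a b hab]
  simp [myV, Ne.symm hab]
  ring

variable {p : ℕ} (μ : Measure (Fin p → ℝ)) [IsProbabilityMeasure μ]

theorem myExpand4 (hsphere : ∀ᵐ z ∂μ, z ⬝ᵥ z = 1) (c1 c2 c3 c4 c5 : ℝ) (a b : Fin p) :
    (∫ z : Fin p → ℝ, (c1 * (z a * z a * z a * z a) + c2 * (z a * z a * z a * z b) +
        c3 * (z a * z a * z b * z b) + c4 * (z a * z b * z b * z b) +
        c5 * (z b * z b * z b * z b)) ∂μ) =
      c1 * myI4 μ a a a a + c2 * myI4 μ a a a b + c3 * myI4 μ a a b b +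
        c4 * myI4 μ a b b b + c5 * myI4 μ b b b b := by
  have i1 := (myInt4 μ hsphere a a a a).const_mul c1
  have i2 := (myInt4 μ hsphere a a a b).const_mul c2
  have i3 := (myInt4 μ hsphere a a b b).const_mul c3
  have i4 := (myInt4 μ hsphere a b b b).const_mul c4
  have i5 := (myInt4 μ hsphere b b b b).const_mul c5
  have i12 : Integrable (fun z : Fin p → ℝ => c1 * (z a * z a * z a * z a) +
      c2 * (z a * z a * z a * z b)) μ := i1.add i2
  have i123 : Integrable (fun z : Fin p → ℝ => c1 * (z a * z a * z a * z a) +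
      c2 * (z a * z a * z a * z b) + c3 * (z a * z a * z b * z b)) μ := i12.add i3
  have i1234 : Integrable (fun z : Fin p → ℝ => c1 * (z a * z a * z a * z a) +
      c2 * (z a * z a * z a * z b) + c3 * (z a * z a * z b * z b) +
      c4 * (z a * z b * z b * z b)) μ := i123.add i4
  rw [integral_add i1234 i5, integral_add i123 i4, integral_add i12 i3, integral_add i1 i2,
      integral_const_mul, integral_const_mul, integral_const_mul, integral_const_mul,
      integral_const_mul]
  rfl

theorem myExpand2 (hsphere : ∀ᵐ z ∂μ, z ⬝ᵥ z = 1) (c1 c2 c3 : ℝ) (a b : Fin p) :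
    (∫ z : Fin p → ℝ, (c1 * (z a * z a) + c2 * (z a * z b) + c3 * (z b * z b)) ∂μ) =
      c1 * myI2 μ a a + c2 * myI2 μ a b + c3 * myI2 μ b b := by
  have i1 := (myInt2 μ hsphere a a).const_mul c1
  have i2 := (myInt2 μ hsphere a b).const_mul c2
  have i3 := (myInt2 μ hsphere b b).const_mul c3
  have i12 : Integrable (fun z : Fin p → ℝ => c1 * (z a * z a) + c2 * (z a * z b)) μ := i1.add i2
  rw [integral_add i12 i3, integral_add i1 i2,
      integral_const_mul, integral_const_mul, integral_const_mul]
  rfl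
theorem myPair (hsphere : ∀ᵐ z ∂μ, z ⬝ᵥ z = 1)
    (hrot : ∀ O ∈ Matrix.orthogonalGroup (Fin p) ℝ, μ.map (fun z => O.mulVec z) = μ)
    (a b : Fin p) (hab : a ≠ b) :
    myI4 μ a a a a = myI4 μ b b b b ∧ myI4 μ a a a a = 3 * myI4 μ a a b b := by
  have hO := myHH_mem _ (myV_unit a b hab)
  have h1 : myI4 μ a a a b = 0 := by
    refine myI4_odd μ hrot b a a a b ?_
    simp [hab]
  have h2 : myI4 μ a b b b = 0 := by
    refine myI4_odd μ hrot a a b b b ?_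
    simp [Ne.symm hab]
  have hpta : ∀ z : Fin p → ℝ,
      (fun w : Fin p → ℝ => w a * w a * w a * w a) ((myHH (myV a b)).mulVec z) =
      (2401/390625 : ℝ) * (z a * z a * z a * z a) + (-32928/390625) * (z a * z a * z a * z b) +
      (169344/390625) * (z a * z a * z b * z b) + (-387072/390625) * (z a * z b * z b * z b) +
      (331776/390625) * (z b * z b * z b * z b) := by
    intro z
    simp only [myV_mulVec_a a b hab]
    ring
  have hptb : ∀ z : Fin p → ℝ,
      (fun w : Fin p → ℝ => w b * w b * w b * w b) ((myHH (myV a b)).mulVec z) =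
      (331776/390625 : ℝ) * (z a * z a * z a * z a) + (387072/390625) * (z a * z a * z a * z b) +
      (169344/390625) * (z a * z a * z b * z b) + (32928/390625) * (z a * z b * z b * z b) +
      (2401/390625) * (z b * z b * z b * z b) := by
    intro z
    simp only [myV_mulVec_b a b hab]
    ring
  have E1 : myI4 μ a a a a = (2401/390625 : ℝ) * myI4 μ a a a a +
      (-32928/390625) * myI4 μ a a a b + (169344/390625) * myI4 μ a a b b +
      (-387072/390625) * myI4 μ a b b b + (331776/390625) * myI4 μ b b b b := by
    have h := myRotInt μ hrot _ hO _ (myMeas4 a a a a)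
    show (∫ z : Fin p → ℝ, z a * z a * z a * z a ∂μ) = _
    conv_lhs => rw [h]
    rw [integral_congr_ae (Filter.Eventually.of_forall hpta), myExpand4 μ hsphere]
  have E2 : myI4 μ b b b b = (331776/390625 : ℝ) * myI4 μ a a a a +
      (387072/390625) * myI4 μ a a a b + (169344/390625) * myI4 μ a a b b +
      (32928/390625) * myI4 μ a b b b + (2401/390625) * myI4 μ b b b b := by
    have h := myRotInt μ hrot _ hO _ (myMeas4 b b b b)
    show (∫ z : Fin p → ℝ, z b * z b * z b * z b ∂μ) = _
    conv_lhs => rw [h]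
    rw [integral_congr_ae (Filter.Eventually.of_forall hptb), myExpand4 μ hsphere]
  rw [h1, h2] at E1 E2
  constructor <;> linarith

theorem myI2_pair (hsphere : ∀ᵐ z ∂μ, z ⬝ᵥ z = 1)
    (hrot : ∀ O ∈ Matrix.orthogonalGroup (Fin p) ℝ, μ.map (fun z => O.mulVec z) = μ)
    (a b : Fin p) (hab : a ≠ b) : myI2 μ a a = myI2 μ b b := by
  have hO := myHH_mem _ (myV_unit a b hab)
  have h1 : myI2 μ a b = 0 := myI2_off μ hrot a b hab
  have hpt : ∀ z : Fin p → ℝ,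
      (fun w : Fin p → ℝ => w a * w a) ((myHH (myV a b)).mulVec z) =
      (49/625 : ℝ) * (z a * z a) + (-336/625) * (z a * z b) + (576/625) * (z b * z b) := by
    intro z
    simp only [myV_mulVec_a a b hab]
    ring
  have E : myI2 μ a a = (49/625 : ℝ) * myI2 μ a a + (-336/625) * myI2 μ a b +
      (576/625) * myI2 μ b b := by
    have h := myRotInt μ hrot _ hO _ (myMeas2 a a)
    show (∫ z : Fin p → ℝ, z a * z a ∂μ) = _
    conv_lhs => rw [h]
    rw [integral_congr_ae (Filter.Eventually.of_forall hpt), myExpand2 μ hsphere]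
  rw [h1] at E
  linarith
theorem myN2 (hsphere : ∀ᵐ z ∂μ, z ⬝ᵥ z = 1) : (∑ a, myI2 μ a a) = 1 := by
  have h : (∑ a, myI2 μ a a) = ∫ z, ∑ a : Fin p, z a * z a ∂μ :=
    (integral_finset_sum univ (fun a _ => myInt2 μ hsphere a a)).symm
  rw [h, integral_congr_ae (g := fun _ => (1:ℝ)) ?_, integral_const]
  · simp
  · filter_upwards [hsphere] with z hz
    exact hz

theorem myI2_diag (hp : 0 < p) (hsphere : ∀ᵐ z ∂μ, z ⬝ᵥ z = 1)
    (hrot : ∀ O ∈ Matrix.orthogonalGroup (Fin p) ℝ, μ.map (fun z => O.mulVec z) = μ)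
    (a : Fin p) : myI2 μ a a = 1 / p := by
  have hall : ∀ b, myI2 μ b b = myI2 μ a a := by
    intro b
    rcases eq_or_ne b a with rfl | h
    · rfl
    · exact myI2_pair μ hsphere hrot b a h
  have hsum : ((p:ℝ)) * myI2 μ a a = 1 := by
    have := myN2 μ hsphere
    rw [Finset.sum_congr rfl (fun b _ => hall b), Finset.sum_const, Finset.card_univ,
      Fintype.card_fin, nsmul_eq_mul] at this
    exact this
  have hp0 : ((p:ℝ)) ≠ 0 := Nat.cast_ne_zero.mpr hp.ne'
  rw [eq_div_iff hp0]
  linarith [hsum]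

theorem myN4 (hsphere : ∀ᵐ z ∂μ, z ⬝ᵥ z = 1) (a : Fin p) :
    (∑ c, myI4 μ a a c c) = myI2 μ a a := by
  have h : (∑ c, myI4 μ a a c c) = ∫ z, ∑ c : Fin p, z a * z a * z c * z c ∂μ :=
    (integral_finset_sum univ (fun c _ => myInt4 μ hsphere a a c c)).symm
  rw [h, integral_congr_ae (g := fun z => z a * z a) ?_]
  · rfl
  · filter_upwards [hsphere] with z hz
    calc (∑ c : Fin p, z a * z a * z c * z c) = z a * z a * ∑ c : Fin p, z c * z c := by
          rw [Finset.mul_sum]; exact Finset.sum_congr rfl fun c _ => by ring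
      _ = z a * z a := by rw [show (∑ c : Fin p, z c * z c) = 1 from hz, mul_one]

theorem myI4_diag (hp : 0 < p) (hsphere : ∀ᵐ z ∂μ, z ⬝ᵥ z = 1)
    (hrot : ∀ O ∈ Matrix.orthogonalGroup (Fin p) ℝ, μ.map (fun z => O.mulVec z) = μ)
    (a : Fin p) : myI4 μ a a a a = 3 / ((p:ℝ) * ((p:ℝ) + 2)) := by
  have hp0 : ((p:ℝ)) ≠ 0 := Nat.cast_ne_zero.mpr hp.ne'
  have hsub : ∀ c ∈ Finset.univ.erase a, myI4 μ a a c c = myI4 μ a a a a / 3 := by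
    intro c hc
    have hac : a ≠ c := Ne.symm (Finset.mem_erase.mp hc).1
    have := (myPair μ hsphere hrot a c hac).2
    linarith
  have hN := myN4 μ hsphere a
  rw [myI2_diag μ hp hsphere hrot a] at hN
  rw [← Finset.sum_erase_add _ _ (Finset.mem_univ a)] at hN
  rw [Finset.sum_congr rfl hsub, Finset.sum_const, Finset.card_erase_of_mem (Finset.mem_univ a),
    Finset.card_univ, Fintype.card_fin, nsmul_eq_mul] at hN
  have hcast : ((p - 1 : ℕ) : ℝ) = (p:ℝ) - 1 := by
    rw [Nat.cast_sub hp]; simp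
  rw [hcast] at hN
  have hA2 : (p:ℝ) * (((p:ℝ) - 1) * (myI4 μ a a a a / 3) + myI4 μ a a a a) = 1 := by
    rw [hN]; field_simp
  rw [eq_div_iff (by positivity)]
  linear_combination 3 * hA2

theorem myI4_offdiag (hp : 0 < p) (hsphere : ∀ᵐ z ∂μ, z ⬝ᵥ z = 1)
    (hrot : ∀ O ∈ Matrix.orthogonalGroup (Fin p) ℝ, μ.map (fun z => O.mulVec z) = μ)
    (a b : Fin p) (hab : a ≠ b) : myI4 μ a a b b = 1 / ((p:ℝ) * ((p:ℝ) + 2)) := by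
  have h1 := (myPair μ hsphere hrot a b hab).2
  have h2 := myI4_diag μ hp hsphere hrot a
  rw [h2] at h1
  linear_combination (-1/3 : ℝ) * h1

theorem myI4_perm1 (a b : Fin p) : myI4 μ a b a b = myI4 μ a a b b := by
  show (∫ z : Fin p → ℝ, z a * z b * z a * z b ∂μ) = ∫ z : Fin p → ℝ, z a * z a * z b * z b ∂μ
  exact integral_congr_ae (Filter.Eventually.of_forall fun z => by ring)

theorem myI4_perm2 (a b : Fin p) : myI4 μ a b b a = myI4 μ a a b b := by
  show (∫ z : Fin p → ℝ, z a * z b * z b * z a ∂μ) = ∫ z : Fin p → ℝ, z a * z a * z b * z b ∂μ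
  exact integral_congr_ae (Filter.Eventually.of_forall fun z => by ring)
theorem myI4_formula (hp : 0 < p) (hsphere : ∀ᵐ z ∂μ, z ⬝ᵥ z = 1)
    (hrot : ∀ O ∈ Matrix.orthogonalGroup (Fin p) ℝ, μ.map (fun z => O.mulVec z) = μ)
    (a b c d : Fin p) :
    myI4 μ a b c d = ((if a = b then (1:ℝ) else 0) * (if c = d then 1 else 0) +
      (if a = c then 1 else 0) * (if b = d then 1 else 0) +
      (if a = d then 1 else 0) * (if b = c then 1 else 0)) / ((p:ℝ) * ((p:ℝ) + 2)) := by
  rcases eq_or_ne a b with rfl | hab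
  · -- pattern a a c d
    rcases eq_or_ne c d with rfl | hcd
    · -- pattern a a c c
      rcases eq_or_ne a c with rfl | hac
      · simp only [if_pos rfl]
        rw [myI4_diag μ hp hsphere hrot a]
        norm_num
      · rw [myI4_offdiag μ hp hsphere hrot a c hac]
        simp only [if_pos rfl, if_neg hac]
        norm_num
    · -- pattern a a c d, c ≠ d
      rcases eq_or_ne c a with rfl | hca
      · -- pattern c c c d with c ≠ d
        rw [myI4_odd μ hrot d c c c d
          (by simp only [if_pos rfl, if_neg hcd]; norm_num)]
        simp only [if_pos rfl, if_neg hcd]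
        norm_num
      · -- pattern a a c d, c ≠ a, c ≠ d : c appears once
        rw [myI4_odd μ hrot c a a c d
          (by simp only [if_pos rfl, if_neg (Ne.symm hca), if_neg (Ne.symm hcd)]; norm_num)]
        simp only [if_pos rfl, if_neg hcd, if_neg (Ne.symm hca)]
        norm_num
  · -- pattern a b c d, a ≠ b
    rcases eq_or_ne c d with rfl | hcd
    · -- pattern a b c c
      rcases eq_or_ne b c with rfl | hbc
      · -- pattern a b b b : a appears once
        rw [myI4_odd μ hrot a a b b b
          (by simp only [if_pos rfl, if_neg (Ne.symm hab)]; norm_num)]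
        simp only [if_neg hab]
        norm_num
      · rcases eq_or_ne a c with rfl | hac
        · -- pattern a b a a : b appears once
          rw [myI4_odd μ hrot b a b a a
            (by simp only [if_pos rfl, if_neg hab]; norm_num)]
          simp only [if_pos rfl, if_neg hab, if_neg hbc]
          norm_num
        · -- pattern a b c c : a once
          rw [myI4_odd μ hrot a a b c c
            (by simp only [if_pos rfl, if_neg (Ne.symm hab), if_neg (Ne.symm hac)]; norm_num)]
          simp only [if_neg hab, if_neg hac]
          norm_num
    · -- pattern a b c d, a ≠ b, c ≠ d
      rcases eq_or_ne a c with rfl | hac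
      · rcases eq_or_ne b d with rfl | hbd
        · -- pattern a b a b
          rw [myI4_perm1 μ a b, myI4_offdiag μ hp hsphere hrot a b hab]
          simp only [if_pos rfl, if_neg hab]
          norm_num
        · -- pattern a b a d, b once
          rw [myI4_odd μ hrot b a b a d
            (by simp only [if_pos rfl, if_neg hab, if_neg (Ne.symm hbd)]; norm_num)]
          simp only [if_neg hab, if_neg hbd, if_neg (Ne.symm hab)]
          norm_num
      · rcases eq_or_ne a d with rfl | had
        · rcases eq_or_ne b c with rfl | hbc
          · -- pattern a b b a
            rw [myI4_perm2 μ a b, myI4_offdiag μ hp hsphere hrot a b hab]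
            simp only [if_pos rfl, if_neg hab, if_neg hac]
            norm_num
          · -- pattern a b c a : c once
            rw [myI4_odd μ hrot c a b c a
              (by simp only [if_pos rfl, if_neg hac, if_neg hbc,
                if_neg (Ne.symm hcd)]; norm_num)]
            simp only [if_neg hab, if_neg hac, if_neg hbc]
            norm_num
        · -- a once
          rw [myI4_odd μ hrot a a b c d
            (by simp only [if_pos rfl, if_neg (Ne.symm hab), if_neg (Ne.symm hac),
              if_neg (Ne.symm had)]; norm_num)]
          simp only [if_neg hab, if_neg hac, if_neg had]
          norm_num
theorem myCoordB {x : Fin p → ℝ} (hx : x ⬝ᵥ x = 1) (a : Fin p) : |x a| ≤ 1 := by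
  have h1 : x a * x a ≤ 1 := by
    have h := Finset.single_le_sum (f := fun b => x b * x b) (fun b _ => mul_self_nonneg (x b))
      (Finset.mem_univ a)
    rw [dotProduct] at hx
    linarith
  rw [abs_le]; constructor <;> nlinarith

theorem myPiAE {n : ℕ} (hsphere : ∀ᵐ z ∂μ, z ⬝ᵥ z = 1) :
    ∀ᵐ z ∂(Measure.pi fun _ : Fin n => μ), ∀ k, z k ⬝ᵥ z k = 1 := by
  rw [MeasureTheory.ae_all_iff]
  intro k
  have h0 : μ {x | ¬ x ⬝ᵥ x = 1} = 0 := ae_iff.mp hsphere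
  exact ae_iff.mpr (Measure.pi_eval_preimage_null (μ := fun _ : Fin n => μ) (i := k)
    (s := {x | ¬ x ⬝ᵥ x = 1}) h0)

theorem myPiInt {n : ℕ} (hsphere : ∀ᵐ z ∂μ, z ⬝ᵥ z = 1) (i j : Fin n) (a b c d : Fin p) :
    Integrable (fun z : Fin n → (Fin p → ℝ) => (z i a * z i b) * (z j c * z j d))
      (Measure.pi fun _ : Fin n => μ) := by
  refine (integrable_const (1:ℝ)).mono' ?_ ?_
  · refine Measurable.aestronglyMeasurable ?_
    have hm : ∀ (k : Fin n) (x : Fin p),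
        Measurable (fun z : Fin n → (Fin p → ℝ) => z k x) := fun k x =>
      (measurable_pi_apply x).comp (measurable_pi_apply k)
    exact ((hm i a).mul (hm i b)).mul ((hm j c).mul (hm j d))
  · filter_upwards [myPiAE μ hsphere] with z hz
    have ha := myCoordB (hz i) a; have hb := myCoordB (hz i) b
    have hc := myCoordB (hz j) c; have hd := myCoordB (hz j) d
    have h0 : ∀ (k : Fin n) (x : Fin p), (0:ℝ) ≤ |z k x| := fun k x => abs_nonneg _
    have h2 : |z i a| * |z i b| ≤ 1 := by nlinarith [h0 i a, h0 i b]
    have h3 : |z j c| * |z j d| ≤ 1 := by nlinarith [h0 j c, h0 j d]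
    calc ‖z i a * z i b * (z j c * z j d)‖ = |z i a| * |z i b| * (|z j c| * |z j d|) := by
          simp [abs_mul]
      _ ≤ 1 := by nlinarith [mul_nonneg (h0 i a) (h0 i b), mul_nonneg (h0 j c) (h0 j d)]

theorem myPiOne {n : ℕ} (i : Fin n) (f : (Fin p → ℝ) → ℝ) :
    ∫ z, f (z i) ∂(Measure.pi fun _ : Fin n => μ) = ∫ x, f x ∂μ := by
  letI : MeasureSpace (Fin p → ℝ) := ⟨μ⟩
  have h2 : ∫ z : Fin n → (Fin p → ℝ),
      ∏ k, (if k = i then f else fun _ => (1:ℝ)) (z k) =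
      ∏ k, ∫ x, (if k = i then f else fun _ => (1:ℝ)) x ∂μ :=
    MeasureTheory.integral_fintype_prod_eq_prod
      (fun k => if k = i then f else fun _ => (1:ℝ))
  have h3 : ∀ z : Fin n → (Fin p → ℝ),
      (∏ k, (if k = i then f else fun _ => (1:ℝ)) (z k)) = f (z i) := by
    intro z
    rw [Finset.prod_eq_single i (fun k _ hk => by rw [if_neg hk]) (by simp)]
    rw [if_pos rfl]
  have h4 : (∏ k, ∫ x, (if k = i then f else fun _ => (1:ℝ)) x ∂μ) = ∫ x, f x ∂μ := by
    rw [Finset.prod_eq_single i (fun k _ hk => by rw [if_neg hk]; simp) (by simp)]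
    rw [if_pos rfl]
  calc ∫ z, f (z i) ∂(Measure.pi fun _ : Fin n => μ)
      = ∫ z : Fin n → (Fin p → ℝ), ∏ k, (if k = i then f else fun _ => (1:ℝ)) (z k) := by
        exact integral_congr_ae (Filter.Eventually.of_forall fun z => (h3 z).symm)
    _ = ∏ k, ∫ x, (if k = i then f else fun _ => (1:ℝ)) x ∂μ := h2
    _ = ∫ x, f x ∂μ := h4

theorem myPiTwo {n : ℕ} (i j : Fin n) (hij : i ≠ j) (f g : (Fin p → ℝ) → ℝ) :
    ∫ z, f (z i) * g (z j) ∂(Measure.pi fun _ : Fin n => μ) =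
      (∫ x, f x ∂μ) * ∫ x, g x ∂μ := by
  letI : MeasureSpace (Fin p → ℝ) := ⟨μ⟩
  set h : Fin n → (Fin p → ℝ) → ℝ :=
    fun k => if k = i then f else if k = j then g else fun _ => (1:ℝ) with hh
  have h2 : ∫ z : Fin n → (Fin p → ℝ), ∏ k, h k (z k) = ∏ k, ∫ x, h k x ∂μ :=
    MeasureTheory.integral_fintype_prod_eq_prod h
  have hprod : ∀ F : (Fin n) → ℝ, (∀ k, k ≠ i → k ≠ j → F k = 1) →
      (∏ k, F k) = F i * F j := by
    intro F hF
    rw [← Finset.prod_subset (Finset.subset_univ {i, j}) (fun k _ hk => by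
      simp only [Finset.mem_insert, Finset.mem_singleton, not_or] at hk
      exact hF k hk.1 hk.2)]
    rw [Finset.prod_pair hij]
  have h3 : ∀ z : Fin n → (Fin p → ℝ), (∏ k, h k (z k)) = f (z i) * g (z j) := by
    intro z
    rw [hprod _ (fun k hki hkj => by simp [hh, if_neg hki, if_neg hkj])]
    simp [hh, if_neg (Ne.symm hij)]
  have h4 : (∏ k, ∫ x, h k x ∂μ) = (∫ x, f x ∂μ) * ∫ x, g x ∂μ := by
    rw [hprod _ (fun k hki hkj => by simp [hh, if_neg hki, if_neg hkj])]
    simp [hh, if_neg (Ne.symm hij)]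
  calc ∫ z, f (z i) * g (z j) ∂(Measure.pi fun _ : Fin n => μ)
      = ∫ z : Fin n → (Fin p → ℝ), ∏ k, h k (z k) :=
        integral_congr_ae (Filter.Eventually.of_forall fun z => (h3 z).symm)
    _ = ∏ k, ∫ x, h k x ∂μ := h2
    _ = (∫ x, f x ∂μ) * ∫ x, g x ∂μ := h4

theorem myI2_formula (hp : 0 < p) (hsphere : ∀ᵐ z ∂μ, z ⬝ᵥ z = 1)
    (hrot : ∀ O ∈ Matrix.orthogonalGroup (Fin p) ℝ, μ.map (fun z => O.mulVec z) = μ)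
    (a b : Fin p) : myI2 μ a b = (if a = b then (1:ℝ) else 0) / p := by
  rcases eq_or_ne a b with rfl | hab
  · rw [myI2_diag μ hp hsphere hrot a, if_pos rfl]
  · rw [myI2_off μ hrot a b hab, if_neg hab, zero_div]
theorem myTrace4 {p : ℕ} (D : Matrix (Fin p) (Fin p) ℝ) (x y : Fin p → ℝ) :
    (Matrix.vecMulVec x x * D * (Matrix.vecMulVec y y * D)).trace =
      ∑ a, ∑ e, ∑ b, ∑ f, (D b e * D f a) * ((x a * x b) * (y e * y f)) := by
  simp only [Matrix.trace, Matrix.diag_apply, Matrix.mul_apply, Matrix.vecMulVec_apply]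
  refine Finset.sum_congr rfl fun a _ => ?_
  refine Finset.sum_congr rfl fun e _ => ?_
  rw [Finset.sum_mul_sum]
  refine Finset.sum_congr rfl fun b _ => ?_
  refine Finset.sum_congr rfl fun f _ => ?_
  ring

theorem myTracePointwise {p n : ℕ} (Λ D : Matrix (Fin p) (Fin p) ℝ) (hΛ : Λᵀ * Λ = D)
    (c : ℝ) (z : Fin n → (Fin p → ℝ)) :
    ((c • (Λ * (∑ i, Matrix.vecMulVec (z i) (z i)) * Λᵀ)) *
      (c • (Λ * (∑ i, Matrix.vecMulVec (z i) (z i)) * Λᵀ))).trace =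
      c^2 * ∑ i, ∑ j, ∑ a, ∑ e, ∑ b, ∑ f,
        (D b e * D f a) * ((z i a * z i b) * (z j e * z j f)) := by
  set S := ∑ i, Matrix.vecMulVec (z i) (z i) with hS
  have h1 : (c • (Λ * S * Λᵀ)) * (c • (Λ * S * Λᵀ)) = (c^2) • ((Λ * S * Λᵀ) * (Λ * S * Λᵀ)) := by
    rw [Matrix.smul_mul, Matrix.mul_smul, smul_smul, sq]
  rw [h1, Matrix.trace_smul, smul_eq_mul]
  congr 1
  have h2 : (Λ * S * Λᵀ) * (Λ * S * Λᵀ) = Λ * (S * D * (S * Λᵀ)) := by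
    rw [← hΛ]; noncomm_ring
  rw [h2, Matrix.trace_mul_comm]
  have h3 : S * D * (S * Λᵀ) * Λ = S * D * (S * D) := by
    rw [← hΛ]; noncomm_ring
  rw [h3]
  have h4 : S * D * (S * D) = ∑ i, ∑ j, Matrix.vecMulVec (z i) (z i) * D *
      (Matrix.vecMulVec (z j) (z j) * D) := by
    rw [hS, Finset.sum_mul, Finset.sum_mul]
    refine Finset.sum_congr rfl fun i _ => ?_
    rw [Finset.mul_sum]
  rw [h4, Matrix.trace_sum]
  refine Finset.sum_congr rfl fun i _ => ?_
  rw [Matrix.trace_sum]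
  refine Finset.sum_congr rfl fun j _ => ?_
  exact myTrace4 D (z i) (z j)
theorem mySumA {p : ℕ} (D : Matrix (Fin p) (Fin p) ℝ) (hsym : ∀ a b, D a b = D b a) (r : ℝ) :
    (∑ a, ∑ e, ∑ b, ∑ f, (D b e * D f a) *
      (((if a = b then (1:ℝ) else 0) * (if e = f then 1 else 0) +
        (if a = e then 1 else 0) * (if b = f then 1 else 0) +
        (if a = f then 1 else 0) * (if b = e then 1 else 0)) / r)) =
      (2 * (D * D).trace + D.trace ^ 2) / r := by
  have key : (∑ a, ∑ e, ∑ b, ∑ f : Fin p, (D b e * D f a) *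
      ((if a = b then (1:ℝ) else 0) * (if e = f then 1 else 0) +
        (if a = e then 1 else 0) * (if b = f then 1 else 0) +
        (if a = f then 1 else 0) * (if b = e then 1 else 0))) =
      2 * (D * D).trace + D.trace ^ 2 := by
    simp only [mul_ite, ite_mul, mul_one, mul_zero, zero_mul, one_mul, mul_add,
      Finset.sum_add_distrib, Finset.sum_ite_eq, Finset.sum_ite_eq', Finset.mem_univ, if_true]
    have t2 : ∀ x : Fin p, (∑ x_1 : Fin p, ∑ x_2 : Fin p,
        if x = x_1 then D x_2 x_1 * D x_2 x else 0) = ∑ x_2 : Fin p, D x_2 x * D x_2 x := by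
      intro x
      rw [Finset.sum_comm]
      simp
    have t3 : ∀ x x_1 : Fin p, (∑ x_2 : Fin p, ∑ x_3 : Fin p,
        if x_2 = x_1 then if x = x_3 then D x_2 x_1 * D x_3 x else 0 else 0) =
        D x_1 x_1 * D x x := by
      intro x x_1
      have hh : ∀ x_2 : Fin p, (∑ x_3 : Fin p,
          if x_2 = x_1 then if x = x_3 then D x_2 x_1 * D x_3 x else 0 else 0) =
          if x_2 = x_1 then D x_2 x_1 * D x x else 0 := by
        intro x_2
        by_cases h : x_2 = x_1 <;> simp [h]
      rw [Finset.sum_congr rfl (fun x_2 _ => hh x_2)]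
      simp
    simp only [t2, t3]
    have e1 : (D * D).trace = ∑ x : Fin p, ∑ x_1 : Fin p, D x x_1 * D x_1 x := by
      simp [Matrix.trace, Matrix.mul_apply, Matrix.diag]
    have e2 : (∑ x : Fin p, ∑ x_2 : Fin p, D x_2 x * D x_2 x) = (D * D).trace := by
      rw [e1]
      exact Finset.sum_congr rfl fun x _ => Finset.sum_congr rfl fun x_2 _ => by
        rw [hsym x_2 x]
    have e3 : D.trace ^ 2 = ∑ x : Fin p, ∑ x_1 : Fin p, D x_1 x_1 * D x x := by
      rw [Matrix.trace, sq, Finset.sum_mul_sum]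
      exact Finset.sum_congr rfl fun x _ => Finset.sum_congr rfl fun x_1 _ => by
        simp [Matrix.diag]; ring
    linarith [e1, e2, e3]
  calc (∑ a, ∑ e, ∑ b, ∑ f : Fin p, (D b e * D f a) *
      (((if a = b then (1:ℝ) else 0) * (if e = f then 1 else 0) +
        (if a = e then 1 else 0) * (if b = f then 1 else 0) +
        (if a = f then 1 else 0) * (if b = e then 1 else 0)) / r))
      = (∑ a, ∑ e, ∑ b, ∑ f : Fin p, (D b e * D f a) *
      ((if a = b then (1:ℝ) else 0) * (if e = f then 1 else 0) +
        (if a = e then 1 else 0) * (if b = f then 1 else 0) +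
        (if a = f then 1 else 0) * (if b = e then 1 else 0))) / r := by
        simp only [← mul_div_assoc, Finset.sum_div]
    _ = _ := by rw [key]
theorem mySumB {p : ℕ} (D : Matrix (Fin p) (Fin p) ℝ) (r : ℝ) :
    (∑ a, ∑ e, ∑ b, ∑ f, (D b e * D f a) *
      (((if a = b then (1:ℝ) else 0) / r) * ((if e = f then (1:ℝ) else 0) / r))) =
      (D * D).trace / (r * r) := by
  have key : (∑ a, ∑ e, ∑ b, ∑ f : Fin p, (D b e * D f a) *
      ((if a = b then (1:ℝ) else 0) * (if e = f then 1 else 0))) = (D * D).trace := by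
    simp only [mul_ite, ite_mul, mul_one, mul_zero, zero_mul, one_mul,
      Finset.sum_ite_eq, Finset.sum_ite_eq', Finset.mem_univ, if_true]
    simp [Matrix.trace, Matrix.mul_apply, Matrix.diag]
  calc (∑ a, ∑ e, ∑ b, ∑ f : Fin p, (D b e * D f a) *
      (((if a = b then (1:ℝ) else 0) / r) * ((if e = f then (1:ℝ) else 0) / r)))
      = (∑ a, ∑ e, ∑ b, ∑ f : Fin p, (D b e * D f a) *
        ((if a = b then (1:ℝ) else 0) * (if e = f then 1 else 0))) / (r * r) := by
        rw [Finset.sum_div]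
        refine Finset.sum_congr rfl fun a _ => ?_
        rw [Finset.sum_div]
        refine Finset.sum_congr rfl fun e _ => ?_
        rw [Finset.sum_div]
        refine Finset.sum_congr rfl fun b _ => ?_
        rw [Finset.sum_div]
        refine Finset.sum_congr rfl fun f _ => ?_
        field_simp
    _ = _ := by rw [key]

theorem mySumCount {n : ℕ} (A B : ℝ) :
    (∑ i : Fin n, ∑ j : Fin n, (if i = j then A else B)) =
      (n : ℝ) * A + ((n : ℝ)^2 - n) * B := by
  have h1 : ∀ i : Fin n, (∑ j, if i = j then A else B) = (n:ℝ) * B + (A - B) := by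
    intro i
    have hpt : ∀ j : Fin n, (if i = j then A else B) = B + (if i = j then A - B else 0) := by
      intro j
      by_cases h : i = j <;> simp [h]
    rw [Finset.sum_congr rfl (fun j _ => hpt j), Finset.sum_add_distrib, Finset.sum_const,
      Finset.card_univ, Fintype.card_fin, nsmul_eq_mul]
    simp [Finset.sum_ite_eq]
  rw [Finset.sum_congr rfl (fun i _ => h1 i), Finset.sum_const, Finset.card_univ,
    Fintype.card_fin, nsmul_eq_mul]
  ring
/-- Let `z₁,…,zₙ` be i.i.d. uniform on the unit sphere of `ℝᵖ` and let `Λ` satisfy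
`Λᵀ Λ = D` with `D` symmetric PSD. For `C̃ = (p/n) Λ (Σᵢ zᵢ zᵢᵀ) Λᵀ`,
`E[Tr(C̃²)] = (1 - 1/n + 2/(n(1+2/p))) Tr(D²) + Tr(D)²/(n(1+2/p))`. -/
theorem expected_trace_sq_tilde_C {p n : ℕ} (hp : 0 < p) (hn : 0 < n)
    (μ : Measure (Fin p → ℝ)) [IsProbabilityMeasure μ]
    (hsphere : ∀ᵐ z ∂μ, z ⬝ᵥ z = 1)
    (hrot : ∀ O ∈ Matrix.orthogonalGroup (Fin p) ℝ, μ.map (fun z => O.mulVec z) = μ)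
    (Λ D : Matrix (Fin p) (Fin p) ℝ) (hD : D.PosSemidef) (hΛ : Λᵀ * Λ = D) :
    (∫ z,
        ((((p : ℝ) / n) • (Λ * (∑ i, vecMulVec (z i) (z i)) * Λᵀ)) *
          (((p : ℝ) / n) • (Λ * (∑ i, vecMulVec (z i) (z i)) * Λᵀ))).trace
        ∂(Measure.pi fun _ : Fin n => μ)) =
      (1 - 1 / (n : ℝ) + 2 / ((n : ℝ) * (1 + 2 / (p : ℝ)))) * (D * D).trace +
        D.trace ^ 2 / ((n : ℝ) * (1 + 2 / (p : ℝ))) := by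
  have hsym : ∀ a b, D a b = D b a := by
    intro a b
    conv_lhs => rw [← hD.1]
    simp [Matrix.conjTranspose_apply]
  have hp0 : ((p:ℝ)) ≠ 0 := Nat.cast_ne_zero.mpr hp.ne'
  have hn0 : ((n:ℝ)) ≠ 0 := Nat.cast_ne_zero.mpr hn.ne'
  -- integrability towers
  have hI6 : ∀ (i j : Fin n) (a e b f : Fin p),
      Integrable (fun z : Fin n → (Fin p → ℝ) =>
        (D b e * D f a) * ((z i a * z i b) * (z j e * z j f)))
        (Measure.pi fun _ : Fin n => μ) :=
    fun i j a e b f => (myPiInt μ hsphere i j a b e f).const_mul _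
  have hI5 : ∀ (i j : Fin n) (a e b : Fin p),
      Integrable (fun z : Fin n → (Fin p → ℝ) => ∑ f,
        (D b e * D f a) * ((z i a * z i b) * (z j e * z j f)))
        (Measure.pi fun _ : Fin n => μ) :=
    fun i j a e b => integrable_finset_sum _ (fun f _ => hI6 i j a e b f)
  have hI4' : ∀ (i j : Fin n) (a e : Fin p),
      Integrable (fun z : Fin n → (Fin p → ℝ) => ∑ b, ∑ f,
        (D b e * D f a) * ((z i a * z i b) * (z j e * z j f)))
        (Measure.pi fun _ : Fin n => μ) :=
    fun i j a e => integrable_finset_sum _ (fun b _ => hI5 i j a e b)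
  have hI3 : ∀ (i j : Fin n) (a : Fin p),
      Integrable (fun z : Fin n → (Fin p → ℝ) => ∑ e, ∑ b, ∑ f,
        (D b e * D f a) * ((z i a * z i b) * (z j e * z j f)))
        (Measure.pi fun _ : Fin n => μ) :=
    fun i j a => integrable_finset_sum _ (fun e _ => hI4' i j a e)
  have hI2 : ∀ (i j : Fin n),
      Integrable (fun z : Fin n → (Fin p → ℝ) => ∑ a, ∑ e, ∑ b, ∑ f,
        (D b e * D f a) * ((z i a * z i b) * (z j e * z j f)))
        (Measure.pi fun _ : Fin n => μ) :=
    fun i j => integrable_finset_sum _ (fun a _ => hI3 i j a)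
  have hI1 : ∀ (i : Fin n),
      Integrable (fun z : Fin n → (Fin p → ℝ) => ∑ j, ∑ a, ∑ e, ∑ b, ∑ f,
        (D b e * D f a) * ((z i a * z i b) * (z j e * z j f)))
        (Measure.pi fun _ : Fin n => μ) :=
    fun i => integrable_finset_sum _ (fun j _ => hI2 i j)
  have step1 : (∫ z,
        ((((p : ℝ) / n) • (Λ * (∑ i, vecMulVec (z i) (z i)) * Λᵀ)) *
          (((p : ℝ) / n) • (Λ * (∑ i, vecMulVec (z i) (z i)) * Λᵀ))).trace
        ∂(Measure.pi fun _ : Fin n => μ)) =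
      ((p:ℝ)/n)^2 * ∫ z, ∑ i, ∑ j, ∑ a, ∑ e, ∑ b, ∑ f,
        (D b e * D f a) * ((z i a * z i b) * (z j e * z j f))
        ∂(Measure.pi fun _ : Fin n => μ) := by
    rw [← integral_const_mul]
    exact integral_congr_ae (Filter.Eventually.of_forall fun z =>
      myTracePointwise Λ D hΛ ((p:ℝ)/n) z)
  rw [step1]
  have step2 : (∫ z, ∑ i, ∑ j, ∑ a, ∑ e, ∑ b, ∑ f,
        (D b e * D f a) * ((z i a * z i b) * (z j e * z j f))
        ∂(Measure.pi fun _ : Fin n => μ)) =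
      ∑ i : Fin n, ∑ j : Fin n, (if i = j then
        (2 * (D * D).trace + D.trace ^ 2) / ((p:ℝ) * ((p:ℝ) + 2))
        else (D * D).trace / ((p:ℝ) * (p:ℝ))) := by
    rw [integral_finset_sum _ (fun i _ => hI1 i)]
    refine Finset.sum_congr rfl fun i _ => ?_
    rw [integral_finset_sum _ (fun j _ => hI2 i j)]
    refine Finset.sum_congr rfl fun j _ => ?_
    rw [integral_finset_sum _ (fun a _ => hI3 i j a)]
    by_cases hij : i = j
    · subst hij
      rw [if_pos rfl]
      have hterm : ∀ a e b f : Fin p,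
          (∫ z, (D b e * D f a) * ((z i a * z i b) * (z i e * z i f))
            ∂(Measure.pi fun _ : Fin n => μ)) =
          (D b e * D f a) *
            (((if a = b then (1:ℝ) else 0) * (if e = f then 1 else 0) +
              (if a = e then 1 else 0) * (if b = f then 1 else 0) +
              (if a = f then 1 else 0) * (if b = e then 1 else 0)) /
              ((p:ℝ) * ((p:ℝ) + 2))) := by
        intro a e b f
        rw [integral_const_mul]
        congr 1
        have h1 : (∫ z, (z i a * z i b) * (z i e * z i f)
            ∂(Measure.pi fun _ : Fin n => μ)) =
            ∫ x, (x a * x b) * (x e * x f) ∂μ :=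
          myPiOne μ i (fun x => (x a * x b) * (x e * x f))
        have h2 : (∫ x, (x a * x b) * (x e * x f) ∂μ) = myI4 μ a b e f :=
          integral_congr_ae (Filter.Eventually.of_forall fun x => by ring)
        rw [h1, h2, myI4_formula μ hp hsphere hrot a b e f]
      calc (∑ a, ∫ z, ∑ e, ∑ b, ∑ f,
            (D b e * D f a) * ((z i a * z i b) * (z i e * z i f))
            ∂(Measure.pi fun _ : Fin n => μ))
          = ∑ a, ∑ e, ∑ b, ∑ f, (D b e * D f a) *
            (((if a = b then (1:ℝ) else 0) * (if e = f then 1 else 0) +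
              (if a = e then 1 else 0) * (if b = f then 1 else 0) +
              (if a = f then 1 else 0) * (if b = e then 1 else 0)) /
              ((p:ℝ) * ((p:ℝ) + 2))) := by
            refine Finset.sum_congr rfl fun a _ => ?_
            rw [integral_finset_sum _ (fun e _ => hI4' i i a e)]
            refine Finset.sum_congr rfl fun e _ => ?_
            rw [integral_finset_sum _ (fun b _ => hI5 i i a e b)]
            refine Finset.sum_congr rfl fun b _ => ?_
            rw [integral_finset_sum _ (fun f _ => hI6 i i a e b f)]
            exact Finset.sum_congr rfl fun f _ => hterm a e b f
        _ = _ := mySumA D hsym _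
    · rw [if_neg hij]
      have hterm : ∀ a e b f : Fin p,
          (∫ z, (D b e * D f a) * ((z i a * z i b) * (z j e * z j f))
            ∂(Measure.pi fun _ : Fin n => μ)) =
          (D b e * D f a) *
            (((if a = b then (1:ℝ) else 0) / (p:ℝ)) *
             ((if e = f then (1:ℝ) else 0) / (p:ℝ))) := by
        intro a e b f
        rw [integral_const_mul]
        congr 1
        have h1 : (∫ z, (z i a * z i b) * (z j e * z j f)
            ∂(Measure.pi fun _ : Fin n => μ)) =
            (∫ x, x a * x b ∂μ) * ∫ x, x e * x f ∂μ :=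
          myPiTwo μ i j hij (fun x => x a * x b) (fun x => x e * x f)
        rw [h1]
        rw [show (∫ x, x a * x b ∂μ) = myI2 μ a b from rfl,
            show (∫ x, x e * x f ∂μ) = myI2 μ e f from rfl,
            myI2_formula μ hp hsphere hrot a b, myI2_formula μ hp hsphere hrot e f]
      calc (∑ a, ∫ z, ∑ e, ∑ b, ∑ f,
            (D b e * D f a) * ((z i a * z i b) * (z j e * z j f))
            ∂(Measure.pi fun _ : Fin n => μ))
          = ∑ a, ∑ e, ∑ b, ∑ f, (D b e * D f a) *
            (((if a = b then (1:ℝ) else 0) / (p:ℝ)) *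
             ((if e = f then (1:ℝ) else 0) / (p:ℝ))) := by
            refine Finset.sum_congr rfl fun a _ => ?_
            rw [integral_finset_sum _ (fun e _ => hI4' i j a e)]
            refine Finset.sum_congr rfl fun e _ => ?_
            rw [integral_finset_sum _ (fun b _ => hI5 i j a e b)]
            refine Finset.sum_congr rfl fun b _ => ?_
            rw [integral_finset_sum _ (fun f _ => hI6 i j a e b f)]
            exact Finset.sum_congr rfl fun f _ => hterm a e b f
        _ = _ := mySumB D ((p:ℝ))
  rw [step2, mySumCount]
  have h2p : (1:ℝ) + 2 / (p:ℝ) ≠ 0 := by positivity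
  have hpp2 : ((p:ℝ)) * ((p:ℝ) + 2) ≠ 0 := by positivity
  field_simp
  ring
end

section
/- Let C̃ be a random symmetric p×p matrix with E[C̃] = Σ, Tr(Σ) = p, and let Σ̃(ρ) = (1-ρ)C̃ + ρI for ρ ∈ R. Then the minimizer of E‖Σ̃(ρ) - Σ‖_F² over ρ is ρ_O = (E[Tr(C̃²)] - E[Tr(C̃)] - E[Tr(C̃Σ)] + Tr(Σ)) / (E[Tr(C̃²)] - 2E[Tr(C̃)] + p), provided the denominator is positive. -/
open Matrix MeasureTheory Finset

/-- The squared Frobenius norm of a matrix. -/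
def frobSq {p : ℕ} (A : Matrix (Fin p) (Fin p) ℝ) : ℝ := ∑ i, ∑ j, (A i j) ^ 2

lemma sum_one_sq (p : ℕ) :
    ∑ i : Fin p, ∑ j : Fin p, ((1 : Matrix (Fin p) (Fin p) ℝ) i j)^2 = p := by
  simp [Matrix.one_apply, apply_ite (·^2)]

lemma sum_one_mul {p : ℕ} (A : Matrix (Fin p) (Fin p) ℝ) :
    ∑ i : Fin p, ∑ j : Fin p, (1 : Matrix (Fin p) (Fin p) ℝ) i j * A i j = A.trace := by
  simp [Matrix.one_apply, Matrix.trace, Matrix.diag, ite_mul]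

lemma sum_mul_symm {p : ℕ} (A B : Matrix (Fin p) (Fin p) ℝ) (h : Bᵀ = B) :
    ∑ i : Fin p, ∑ j : Fin p, A i j * B i j = (A * B).trace := by
  simp only [Matrix.trace, Matrix.diag, Matrix.mul_apply]
  refine Finset.sum_congr rfl fun i _ => Finset.sum_congr rfl fun j _ => ?_
  have hb : B j i = B i j := congrFun (congrFun h i) j
  rw [hb]

lemma quad_min (IB N D : ℝ) (hD : 0 < D) (x : ℝ) :
    IB + 2*(N/D)*(-N) + (N/D)^2*D ≤ IB + 2*x*(-N) + x^2*D := by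
  have hD0 : D ≠ 0 := ne_of_gt hD
  have h : (IB + 2*x*(-N) + x^2*D) - (IB + 2*(N/D)*(-N) + (N/D)^2*D)
      = (x*D - N)^2 / D := by field_simp; ring
  have h2 : 0 ≤ (x*D - N)^2 / D := div_nonneg (sq_nonneg _) hD.le
  linarith

/-- Let `C̃` be a random symmetric `p×p` matrix with `E[C̃] = Σ`, `Tr(Σ) = p`, and let
`Σ̃(ρ) = (1-ρ)C̃ + ρI`. The minimizer of `E‖Σ̃(ρ) - Σ‖_F²` over `ρ` is
`ρ_O = (E[Tr C̃²] - E[Tr C̃] - E[Tr(C̃Σ)] + Tr Σ)/(E[Tr C̃²] - 2 E[Tr C̃] + p)`,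
provided the denominator is positive. -/
theorem shrinkage_mse_minimizer {p : ℕ} {Ω : Type*} [MeasurableSpace Ω]
    (μ : Measure Ω) [IsProbabilityMeasure μ]
    (C : Ω → Matrix (Fin p) (Fin p) ℝ) (S : Matrix (Fin p) (Fin p) ℝ)
    (hCsym : ∀ ω, (C ω)ᵀ = C ω) (hSsym : Sᵀ = S) (htr : S.trace = (p : ℝ))
    (hint1 : ∀ i j, Integrable (fun ω => C ω i j) μ)
    (hint2 : ∀ i j k l, Integrable (fun ω => C ω i j * C ω k l) μ)
    (hmean : ∀ i j, (∫ ω, C ω i j ∂μ) = S i j)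
    (hden : 0 < (∫ ω, (C ω * C ω).trace ∂μ) - 2 * (∫ ω, (C ω).trace ∂μ) + (p : ℝ)) :
    ∀ ρ : ℝ,
      (∫ ω, frobSq ((1 - (((∫ ω', (C ω' * C ω').trace ∂μ) - (∫ ω', (C ω').trace ∂μ) -
              (∫ ω', (C ω' * S).trace ∂μ) + S.trace) /
            ((∫ ω', (C ω' * C ω').trace ∂μ) - 2 * (∫ ω', (C ω').trace ∂μ) + (p : ℝ)))) • C ω +
          (((∫ ω', (C ω' * C ω').trace ∂μ) - (∫ ω', (C ω').trace ∂μ) -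
              (∫ ω', (C ω' * S).trace ∂μ) + S.trace) /
            ((∫ ω', (C ω' * C ω').trace ∂μ) - 2 * (∫ ω', (C ω').trace ∂μ) + (p : ℝ))) • 1 - S) ∂μ)
        ≤ (∫ ω, frobSq ((1 - ρ) • C ω + ρ • (1 : Matrix (Fin p) (Fin p) ℝ) - S) ∂μ) := by
  intro ρ
  -- entrywise integrability
  have ib : ∀ i j : Fin p, Integrable (fun ω => (C ω i j - S i j)^2) μ := by
    intro i j
    have h : (fun ω => (C ω i j - S i j)^2)
        = fun ω => C ω i j * C ω i j + (-(2*S i j)) * C ω i j + (S i j)^2 := by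
      funext ω; ring
    rw [h]
    exact ((hint2 i j i j).add ((hint1 i j).const_mul _)).add (integrable_const _)
  have im : ∀ i j : Fin p, Integrable
      (fun ω => (C ω i j - S i j) * ((1 : Matrix (Fin p) (Fin p) ℝ) i j - C ω i j)) μ := by
    intro i j
    have h : (fun ω => (C ω i j - S i j) * ((1 : Matrix (Fin p) (Fin p) ℝ) i j - C ω i j))
        = fun ω => (-1) * (C ω i j * C ω i j)
            + ((1 : Matrix (Fin p) (Fin p) ℝ) i j + S i j) * C ω i j
            + (-(S i j * (1 : Matrix (Fin p) (Fin p) ℝ) i j)) := by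
      funext ω; ring
    rw [h]
    exact (((hint2 i j i j).const_mul _).add ((hint1 i j).const_mul _)).add (integrable_const _)
  have ia : ∀ i j : Fin p, Integrable
      (fun ω => ((1 : Matrix (Fin p) (Fin p) ℝ) i j - C ω i j)^2) μ := by
    intro i j
    have h : (fun ω => ((1 : Matrix (Fin p) (Fin p) ℝ) i j - C ω i j)^2)
        = fun ω => C ω i j * C ω i j
            + (-(2 * (1 : Matrix (Fin p) (Fin p) ℝ) i j)) * C ω i j
            + ((1 : Matrix (Fin p) (Fin p) ℝ) i j)^2 := by
      funext ω; ring
    rw [h]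
    exact ((hint2 i j i j).add ((hint1 i j).const_mul _)).add (integrable_const _)
  have hBint : Integrable (fun ω => ∑ i, ∑ j, (C ω i j - S i j)^2) μ :=
    integrable_finset_sum _ fun i _ => integrable_finset_sum _ fun j _ => ib i j
  have hMint : Integrable (fun ω => ∑ i, ∑ j,
      (C ω i j - S i j) * ((1 : Matrix (Fin p) (Fin p) ℝ) i j - C ω i j)) μ :=
    integrable_finset_sum _ fun i _ => integrable_finset_sum _ fun j _ => im i j
  have hAint : Integrable (fun ω => ∑ i, ∑ j,
      ((1 : Matrix (Fin p) (Fin p) ℝ) i j - C ω i j)^2) μ :=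
    integrable_finset_sum _ fun i _ => integrable_finset_sum _ fun j _ => ia i j
  -- trace integrability
  have hTrint : Integrable (fun ω => (C ω).trace) μ := by
    simp only [Matrix.trace, Matrix.diag]
    exact integrable_finset_sum _ fun i _ => hint1 i i
  have hTr2int : Integrable (fun ω => (C ω * C ω).trace) μ := by
    simp only [Matrix.trace, Matrix.diag, Matrix.mul_apply]
    exact integrable_finset_sum _ fun i _ => integrable_finset_sum _ fun j _ => hint2 i j j i
  have hTrSint : Integrable (fun ω => (C ω * S).trace) μ := by
    simp only [Matrix.trace, Matrix.diag, Matrix.mul_apply]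
    exact integrable_finset_sum _ fun i _ => integrable_finset_sum _ fun j _ =>
      (hint1 i j).mul_const (S j i)
  -- pointwise trace identities
  have hApt : ∀ ω, (∑ i, ∑ j, ((1 : Matrix (Fin p) (Fin p) ℝ) i j - C ω i j)^2)
      = (p:ℝ) - 2*(C ω).trace + (C ω * C ω).trace := by
    intro ω
    have expand : ∀ i j : Fin p, ((1 : Matrix (Fin p) (Fin p) ℝ) i j - C ω i j)^2
        = ((1 : Matrix (Fin p) (Fin p) ℝ) i j)^2
          - 2*((1 : Matrix (Fin p) (Fin p) ℝ) i j * C ω i j) + C ω i j * C ω i j := by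
      intro i j; ring
    simp only [expand, Finset.sum_add_distrib, Finset.sum_sub_distrib, ← Finset.mul_sum]
    rw [sum_one_sq, sum_one_mul, sum_mul_symm _ _ (hCsym ω)]
  have hMpt : ∀ ω, (∑ i, ∑ j,
      (C ω i j - S i j) * ((1 : Matrix (Fin p) (Fin p) ℝ) i j - C ω i j))
      = (C ω).trace - (C ω * C ω).trace - S.trace + (C ω * S).trace := by
    intro ω
    have expand : ∀ i j : Fin p,
        (C ω i j - S i j) * ((1 : Matrix (Fin p) (Fin p) ℝ) i j - C ω i j)
        = (1 : Matrix (Fin p) (Fin p) ℝ) i j * C ω i j - C ω i j * C ω i j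
          - (1 : Matrix (Fin p) (Fin p) ℝ) i j * S i j + C ω i j * S i j := by
      intro i j; ring
    simp only [expand, Finset.sum_add_distrib, Finset.sum_sub_distrib]
    rw [sum_one_mul, sum_one_mul, sum_mul_symm _ _ (hCsym ω), sum_mul_symm _ _ hSsym]
  -- integral identities
  have hAI : (∫ ω, ∑ i, ∑ j, ((1 : Matrix (Fin p) (Fin p) ℝ) i j - C ω i j)^2 ∂μ)
      = (∫ ω', (C ω' * C ω').trace ∂μ) - 2 * (∫ ω', (C ω').trace ∂μ) + (p : ℝ) := by
    have h : (fun ω => ∑ i, ∑ j, ((1 : Matrix (Fin p) (Fin p) ℝ) i j - C ω i j)^2)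
        = fun ω => ((p:ℝ) + (-2) * (C ω).trace) + (C ω * C ω).trace := by
      funext ω; rw [hApt ω]; ring
    have hf1 : Integrable (fun ω => (p:ℝ) + (-2) * (C ω).trace) μ :=
      (integrable_const _).add (hTrint.const_mul _)
    have hf0 : Integrable (fun _ : Ω => (p:ℝ)) μ := integrable_const _
    rw [h, integral_add hf1 hTr2int, integral_add hf0 (hTrint.const_mul (-2)),
      integral_const_mul, integral_const]
    simp only [probReal_univ, smul_eq_mul, one_mul]
    ring
  have hMI : (∫ ω, ∑ i, ∑ j,
      (C ω i j - S i j) * ((1 : Matrix (Fin p) (Fin p) ℝ) i j - C ω i j) ∂μ)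
      = -((∫ ω', (C ω' * C ω').trace ∂μ) - (∫ ω', (C ω').trace ∂μ)
          - (∫ ω', (C ω' * S).trace ∂μ) + S.trace) := by
    have h : (fun ω => ∑ i, ∑ j,
        (C ω i j - S i j) * ((1 : Matrix (Fin p) (Fin p) ℝ) i j - C ω i j))
        = fun ω => (((C ω).trace + (-S.trace)) + ((-1) * (C ω * C ω).trace + (C ω * S).trace)) := by
      funext ω; rw [hMpt ω]; ring
    have hf1 : Integrable (fun ω => (C ω).trace + (-S.trace)) μ :=
      hTrint.add (integrable_const _)
    have hf2 : Integrable (fun ω => (-1) * (C ω * C ω).trace + (C ω * S).trace) μ :=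
      (hTr2int.const_mul _).add hTrSint
    rw [h, integral_add hf1 hf2, integral_add hTrint (integrable_const (-S.trace)),
      integral_add (hTr2int.const_mul (-1)) hTrSint, integral_const_mul, integral_const]
    simp only [probReal_univ, smul_eq_mul, one_mul]
    ring
  -- the quadratic expansion of the objective
  have key : ∀ r : ℝ, (∫ ω, frobSq ((1 - r) • C ω + r • (1 : Matrix (Fin p) (Fin p) ℝ) - S) ∂μ)
      = (∫ ω, ∑ i, ∑ j, (C ω i j - S i j)^2 ∂μ)
        + 2*r*(-((∫ ω', (C ω' * C ω').trace ∂μ) - (∫ ω', (C ω').trace ∂μ)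
            - (∫ ω', (C ω' * S).trace ∂μ) + S.trace))
        + r^2*((∫ ω', (C ω' * C ω').trace ∂μ) - 2 * (∫ ω', (C ω').trace ∂μ) + (p : ℝ)) := by
    intro r
    have hpt : ∀ ω, frobSq ((1 - r) • C ω + r • (1 : Matrix (Fin p) (Fin p) ℝ) - S)
        = (∑ i, ∑ j, (C ω i j - S i j)^2)
          + 2*r*(∑ i, ∑ j, (C ω i j - S i j) * ((1 : Matrix (Fin p) (Fin p) ℝ) i j - C ω i j))
          + r^2*(∑ i, ∑ j, ((1 : Matrix (Fin p) (Fin p) ℝ) i j - C ω i j)^2) := by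
      intro ω
      simp only [frobSq, Matrix.sub_apply, Matrix.add_apply, Matrix.smul_apply, smul_eq_mul,
        Finset.mul_sum, ← Finset.sum_add_distrib]
      exact Finset.sum_congr rfl fun i _ => Finset.sum_congr rfl fun j _ => by ring
    simp only [hpt]
    have hf1 : Integrable (fun ω => (∑ i, ∑ j, (C ω i j - S i j)^2)
        + 2*r*(∑ i, ∑ j, (C ω i j - S i j) * ((1 : Matrix (Fin p) (Fin p) ℝ) i j - C ω i j))) μ :=
      hBint.add (hMint.const_mul _)
    rw [integral_add hf1 (hAint.const_mul (r^2)),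
      integral_add hBint (hMint.const_mul (2*r)), integral_const_mul, integral_const_mul,
      hMI, hAI]
  rw [key, key]
  exact quad_min _ _ _ hden ρ
end
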